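/- arXiv:hep-th/9511044 — 2 statements merged into one kernel-verified Lean document; each statement's English description precedes it below -/
import Mathlib

section
/- The cometric of a finite-dimensional involutory Hopf algebra over ℂ is nondegenerate: the bilinear form h on the dual Hopf algebra A* defined by h(ξ,η) = tr(L*_{ξ∗η}) is a nondegenerate bilinear form (equivalently, its Gram matrix with respect to any basis of A* is invertible). -/
open TensorProduct Coalgebra

/-- The convolution product on the dual of a coalgebra, as a bilinear map:
`(ξ ∗ η)(a) = Σ ξ(a⁽¹⁾) η(a⁽²⁾)`.  `dualConv A ξ` is left convolution
multiplication `L*_ξ` by `ξ` on the dual. -/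
noncomputable def dualConv (A : Type*) [AddCommGroup A] [Module ℂ A] [Coalgebra ℂ A] :
    Module.Dual ℂ A →ₗ[ℂ] Module.Dual ℂ A →ₗ[ℂ] Module.Dual ℂ A :=
  LinearMap.mk₂ ℂ
    (fun ξ η => LinearMap.mul' ℂ ℂ ∘ₗ TensorProduct.map ξ η ∘ₗ (comul : A →ₗ[ℂ] A ⊗[ℂ] A))
    (fun ξ₁ ξ₂ η => by
      simp [TensorProduct.map_add_left, LinearMap.add_comp, LinearMap.comp_add])
    (fun c ξ η => by
      simp [TensorProduct.map_smul_left, LinearMap.smul_comp, LinearMap.comp_smul])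
    (fun ξ η₁ η₂ => by
      simp [TensorProduct.map_add_right, LinearMap.add_comp, LinearMap.comp_add])
    (fun c ξ η => by
      simp [TensorProduct.map_smul_right, LinearMap.smul_comp, LinearMap.comp_smul])

/-- The cometric: the bilinear form `h(ξ,η) = tr(L*_{ξ∗η})` on the dual Hopf algebra. -/
noncomputable def hopfCometric (A : Type*) [AddCommGroup A] [Module ℂ A] [Coalgebra ℂ A] :
    Module.Dual ℂ A →ₗ[ℂ] Module.Dual ℂ A →ₗ[ℂ] ℂ :=
  (dualConv A).compr₂ ((LinearMap.trace ℂ (Module.Dual ℂ A)) ∘ₗ (dualConv A))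

set_option linter.unusedSectionVars false

noncomputable section

namespace HopfAux
variable {A : Type*} [Ring A] [HopfAlgebra ℂ A]

abbrev aS : A →ₗ[ℂ] A := HopfAlgebra.antipode (R := ℂ)

lemma sum_counit_smul_right {ι : Type*} {a : A} (r : Coalgebra.Repr ℂ a ι) :
    ∑ i ∈ r.index, Coalgebra.counit (R := ℂ) (r.left i) • r.right i = a := by
  simpa only [map_sum, TensorProduct.lid_tmul, one_smul] using
    congrArg (TensorProduct.lid ℂ A) (Coalgebra.sum_counit_tmul_eq r)

lemma sum_counit_smul_left {ι : Type*} {a : A} (r : Coalgebra.Repr ℂ a ι) :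
    ∑ i ∈ r.index, Coalgebra.counit (R := ℂ) (r.right i) • r.left i = a := by
  simpa only [map_sum, TensorProduct.rid_tmul, one_smul] using
    congrArg (TensorProduct.rid ℂ A) (Coalgebra.sum_tmul_counit_eq r)

def mulRepr {ι κ : Type*} {a b : A} (ra : Coalgebra.Repr ℂ a ι) (rb : Coalgebra.Repr ℂ b κ) :
    Coalgebra.Repr ℂ (a * b) (ι × κ) where
  index := ra.index ×ˢ rb.index
  left p := ra.left p.1 * rb.left p.2
  right p := ra.right p.1 * rb.right p.2
  eq := by
    rw [Finset.sum_product, Bialgebra.comul_mul (R := ℂ), ← ra.eq, ← rb.eq, Finset.sum_mul_sum]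
    simp [Algebra.TensorProduct.tmul_mul_tmul]

lemma aS_one : aS (1 : A) = 1 := by
  have h := HopfAlgebra.mul_antipode_rTensor_comul_apply (R := ℂ) (a := (1 : A))
  simpa [Algebra.TensorProduct.one_def] using h

def mk₃ {B : Type*} [AddCommGroup B] [Module ℂ B] (f : A → A → A → B)
    (h1 : ∀ x x' y z, f (x + x') y z = f x y z + f x' y z)
    (h2 : ∀ (c : ℂ) x y z, f (c • x) y z = c • f x y z)
    (h3 : ∀ x y y' z, f x (y + y') z = f x y z + f x y' z)
    (h4 : ∀ (c : ℂ) x y z, f x (c • y) z = c • f x y z)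
    (h5 : ∀ x y z z', f x y (z + z') = f x y z + f x y z')
    (h6 : ∀ (c : ℂ) x y z, f x y (c • z) = c • f x y z) :
    A →ₗ[ℂ] A →ₗ[ℂ] A →ₗ[ℂ] B where
  toFun x := LinearMap.mk₂ ℂ (f x) (h3 x) (fun c y z => h4 c x y z) (h5 x)
    (fun c y z => h6 c x y z)
  map_add' x x' := by
    ext y z
    simp only [LinearMap.mk₂_apply, LinearMap.add_apply]
    exact h1 x x' y z
  map_smul' c x := by
    ext y z
    simp only [LinearMap.mk₂_apply, LinearMap.smul_apply, RingHom.id_apply]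
    exact h2 c x y z

@[simp] lemma mk₃_apply {B : Type*} [AddCommGroup B] [Module ℂ B] (f : A → A → A → B)
    (h1 h2 h3 h4 h5 h6) (x y z : A) : mk₃ f h1 h2 h3 h4 h5 h6 x y z = f x y z := rfl

def tri3 {B : Type*} [AddCommGroup B] [Module ℂ B] (f : A →ₗ[ℂ] A →ₗ[ℂ] A →ₗ[ℂ] B) :
    A ⊗[ℂ] (A ⊗[ℂ] A) →ₗ[ℂ] B :=
  TensorProduct.lift ((TensorProduct.lift.equiv (RingHom.id ℂ) A A B).toLinearMap ∘ₗ f)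

@[simp] lemma tri3_tmul {B : Type*} [AddCommGroup B] [Module ℂ B]
    (f : A →ₗ[ℂ] A →ₗ[ℂ] A →ₗ[ℂ] B) (x y z : A) :
    tri3 f (x ⊗ₜ (y ⊗ₜ z)) = f x y z := by
  simp [tri3]

lemma sum_sandwich {ι : Type*} (s : Finset ι) (F G : ι → A) (u v c : A)
    (h : ∑ i ∈ s, F i * G i = c) :
    ∑ i ∈ s, u * F i * (G i * v) = u * c * v := by
  have e : ∀ i ∈ s, u * F i * (G i * v) = u * ((F i * G i) * v) := fun i _ => by
    rw [mul_assoc, mul_assoc]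
  rw [Finset.sum_congr rfl e, ← Finset.mul_sum, ← Finset.sum_mul, h, ← mul_assoc]

lemma sum_antipode_sandwich {ι : Type*} {c : A} (rc : Coalgebra.Repr ℂ c ι) (v : A) :
    ∑ p ∈ rc.index, aS (rc.left p) * (rc.right p * v) =
      Coalgebra.counit (R := ℂ) c • v := by
  have e : ∀ p ∈ rc.index, aS (rc.left p) * (rc.right p * v) =
      (aS (rc.left p) * rc.right p) * v := fun p _ => (mul_assoc _ _ _).symm
  rw [Finset.sum_congr rfl e, ← Finset.sum_mul, HopfAlgebra.sum_antipode_mul_eq_smul rc,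
    smul_mul_assoc, one_mul]

lemma sum_mul_antipode_sandwich {ι : Type*} {c : A} (rc : Coalgebra.Repr ℂ c ι) (u v : A) :
    ∑ p ∈ rc.index, u * rc.left p * (aS (rc.right p) * v) =
      Coalgebra.counit (R := ℂ) c • (u * v) := by
  rw [sum_sandwich rc.index rc.left (fun p => aS (rc.right p)) u v _
    (HopfAlgebra.sum_mul_antipode_eq_smul rc), mul_smul_comm, mul_one, smul_mul_assoc]

lemma aS_mul (a b : A) : aS (a * b) = aS b * aS a := by
  classical
  let ra := ℛ ℂ a
  let rb := ℛ ℂ b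
  let ra1 : (i : A × A) → Coalgebra.Repr ℂ (ra.left i) (A × A) := fun i => ℛ ℂ (ra.left i)
  let ra2 : (i : A × A) → Coalgebra.Repr ℂ (ra.right i) (A × A) := fun i => ℛ ℂ (ra.right i)
  let rb1 : (j : A × A) → Coalgebra.Repr ℂ (rb.left j) (A × A) := fun j => ℛ ℂ (rb.left j)
  let rb2 : (j : A × A) → Coalgebra.Repr ℂ (rb.right j) (A × A) := fun j => ℛ ℂ (rb.right j)
  -- the `b`-part of the Sweedler expression, as a trilinear function of the `a`-pieces
  let Fa : A → A → A → A := fun x y z => ∑ j ∈ rb.index, ∑ l ∈ (rb2 j).index,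
      aS (x * rb.left j) * (y * (rb2 j).left l * (aS ((rb2 j).right l) * aS z))
  have ΨaL : ∀ x x' y z, Fa (x + x') y z = Fa x y z + Fa x' y z := by
    intro x x' y z
    simp only [Fa, add_mul, map_add, ← Finset.sum_add_distrib]
  have ΨaS : ∀ (c : ℂ) x y z, Fa (c • x) y z = c • Fa x y z := by
    intro c x y z
    simp only [Fa, smul_mul_assoc, map_smul, Finset.smul_sum]
  have ΨbL : ∀ x y y' z, Fa x (y + y') z = Fa x y z + Fa x y' z := by
    intro x y y' z
    simp only [Fa, add_mul, mul_add, ← Finset.sum_add_distrib]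
  have ΨbS : ∀ (c : ℂ) x y z, Fa x (c • y) z = c • Fa x y z := by
    intro c x y z
    simp only [Fa, smul_mul_assoc, mul_smul_comm, Finset.smul_sum]
  have ΨcL : ∀ x y z z', Fa x y (z + z') = Fa x y z + Fa x y z' := by
    intro x y z z'
    simp only [Fa, map_add, mul_add, ← Finset.sum_add_distrib]
  have ΨcS : ∀ (c : ℂ) x y z, Fa x y (c • z) = c • Fa x y z := by
    intro c x y z
    simp only [Fa, map_smul, mul_smul_comm, Finset.smul_sum]
  let Ψa : A →ₗ[ℂ] A →ₗ[ℂ] A →ₗ[ℂ] A := mk₃ Fa ΨaL ΨaS ΨbL ΨbS ΨcL ΨcS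
  -- Way 1 : `aS (a*b)` equals the big Sweedler sum
  have way1 : aS (a * b) =
      ∑ i ∈ ra.index, ∑ k ∈ (ra2 i).index,
        Fa (ra.left i) ((ra2 i).left k) ((ra2 i).right k) := by
    have hl : ∀ i, ∀ k, Fa (ra.left i) ((ra2 i).left k) ((ra2 i).right k)
        = ∑ j ∈ rb.index, (Coalgebra.counit (R := ℂ) (rb.right j)) •
            (aS (ra.left i * rb.left j) * ((ra2 i).left k * aS ((ra2 i).right k))) := by
      intro i k
      refine Finset.sum_congr rfl fun j _ => ?_
      rw [← Finset.mul_sum, sum_mul_antipode_sandwich (rb2 j), mul_smul_comm]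
    calc aS (a * b)
        = ∑ i ∈ ra.index, ∑ j ∈ rb.index,
            (Coalgebra.counit (R := ℂ) (ra.right i) * Coalgebra.counit (R := ℂ) (rb.right j)) •
              aS (ra.left i * rb.left j) := by
          conv_lhs => rw [← sum_counit_smul_left ra, ← sum_counit_smul_left rb,
            Finset.sum_mul_sum]
          rw [map_sum]
          refine Finset.sum_congr rfl fun i _ => ?_
          rw [map_sum]
          refine Finset.sum_congr rfl fun j _ => ?_
          rw [smul_mul_assoc, mul_smul_comm, map_smul, map_smul, smul_smul]
      _ = ∑ i ∈ ra.index, ∑ k ∈ (ra2 i).index,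
            Fa (ra.left i) ((ra2 i).left k) ((ra2 i).right k) := by
          refine Finset.sum_congr rfl fun i _ => ?_
          rw [Finset.sum_congr rfl fun k _ => hl i k, Finset.sum_comm]
          refine Finset.sum_congr rfl fun j _ => ?_
          rw [← Finset.smul_sum, ← Finset.mul_sum,
            HopfAlgebra.sum_mul_antipode_eq_smul (ra2 i),
            mul_smul_comm, mul_one, smul_smul, mul_comm]
  -- Way 2 : coassociativity rewrites
  have hcoA := Coalgebra.sum_tmul_tmul_eq (R := ℂ) ra ra1 ra2
  have hψA := congrArg (tri3 Ψa) hcoA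
  simp only [map_sum, tri3_tmul, Ψa, mk₃_apply] at hψA
  -- hψA : ∑ i, ∑ k ∈ (ra1 i).index, Fa ((ra1 i).left k) ((ra1 i).right k) (ra.right i)
  --      = ∑ i, ∑ k ∈ (ra2 i).index, Fa (ra.left i) ((ra2 i).left k) ((ra2 i).right k)
  rw [way1, ← hψA]
  -- rewrite Fa using coassociativity on b
  have hFa2 : ∀ x y z : A, Fa x y z = ∑ j ∈ rb.index, ∑ l ∈ (rb1 j).index,
      aS (x * (rb1 j).left l) * (y * (rb1 j).right l * (aS (rb.right j) * aS z)) := by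
    intro x y z
    have hcoB := Coalgebra.sum_tmul_tmul_eq (R := ℂ) rb rb1 rb2
    have h2 := congrArg (tri3 (mk₃ (fun p q r' => aS (x * p) * (y * q * (aS r' * aS z)))
      (by intro p p' q r'; simp only [mul_add, add_mul, map_add])
      (by intro c p q r'; simp only [smul_mul_assoc, mul_smul_comm, map_smul])
      (by intro p q q' r'; simp only [mul_add, add_mul])
      (by intro c p q r'; simp only [smul_mul_assoc, mul_smul_comm])
      (by intro p q r' r''; simp only [mul_add, add_mul, map_add])
      (by intro c p q r'; simp only [smul_mul_assoc, mul_smul_comm, map_smul]))) hcoB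
    simp only [map_sum, tri3_tmul, mk₃_apply] at h2
    exact h2.symm
  calc ∑ i ∈ ra.index, ∑ k ∈ (ra1 i).index,
        Fa ((ra1 i).left k) ((ra1 i).right k) (ra.right i)
      = ∑ i ∈ ra.index, ∑ j ∈ rb.index,
          (Coalgebra.counit (R := ℂ) (ra.left i) * Coalgebra.counit (R := ℂ) (rb.left j)) •
            (aS (rb.right j) * aS (ra.right i)) := by
        refine Finset.sum_congr rfl fun i _ => ?_
        rw [Finset.sum_congr rfl fun k (_ : k ∈ (ra1 i).index) =>
          hFa2 ((ra1 i).left k) ((ra1 i).right k) (ra.right i), Finset.sum_comm]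
        refine Finset.sum_congr rfl fun j _ => ?_
        rw [← Finset.sum_product', ← Bialgebra.counit_mul (R := ℂ) (a := ra.left i)
          (b := rb.left j)]
        exact sum_antipode_sandwich (mulRepr (ra1 i) (rb1 j)) _
      _ = aS b * aS a := by
        have hb : aS b = ∑ j ∈ rb.index,
            Coalgebra.counit (R := ℂ) (rb.left j) • aS (rb.right j) := by
          conv_lhs => rw [← sum_counit_smul_right rb]
          rw [map_sum]
          simp only [map_smul]
        have ha : aS a = ∑ i ∈ ra.index,
            Coalgebra.counit (R := ℂ) (ra.left i) • aS (ra.right i) := by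
          conv_lhs => rw [← sum_counit_smul_right ra]
          rw [map_sum]
          simp only [map_smul]
        rw [hb, ha, Finset.sum_mul_sum, Finset.sum_comm]
        refine Finset.sum_congr rfl fun j _ => Finset.sum_congr rfl fun i _ => ?_
        rw [smul_mul_assoc, mul_smul_comm, smul_smul, mul_comm]


lemma sum_antipode_right_mul_left {ι : Type*} (hinv : ∀ x : A, aS (aS x) = x) {a : A}
    (r : Coalgebra.Repr ℂ a ι) :
    ∑ i ∈ r.index, aS (r.right i) * r.left i = Coalgebra.counit (R := ℂ) a • 1 := by
  have h := congrArg aS (HopfAlgebra.sum_antipode_mul_eq_smul r)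
  rw [map_sum, map_smul, aS_one] at h
  simpa only [aS_mul, hinv] using h

lemma sum_right_mul_antipode_left {ι : Type*} (hinv : ∀ x : A, aS (aS x) = x) {a : A}
    (r : Coalgebra.Repr ℂ a ι) :
    ∑ i ∈ r.index, r.right i * aS (r.left i) = Coalgebra.counit (R := ℂ) a • 1 := by
  have h := congrArg aS (HopfAlgebra.sum_mul_antipode_eq_smul r)
  rw [map_sum, map_smul, aS_one] at h
  simpa only [aS_mul, hinv] using h

/-- The operator `T_μ : a ↦ ∑ μ(a⁽¹⁾) a⁽²⁾`, as a linear map in `μ`. -/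
def Tl : Module.Dual ℂ A →ₗ[ℂ] A →ₗ[ℂ] A where
  toFun μ := (TensorProduct.lid ℂ A).toLinearMap ∘ₗ (μ.rTensor A) ∘ₗ
    (Coalgebra.comul (R := ℂ))
  map_add' μ ν := by
    ext a
    simp [LinearMap.rTensor_add]
  map_smul' c μ := by
    ext a
    simp [LinearMap.rTensor_smul]

lemma Tl_apply {ι : Type*} {a : A} (μ : Module.Dual ℂ A) (r : Coalgebra.Repr ℂ a ι) :
    Tl μ a = ∑ i ∈ r.index, μ (r.left i) • r.right i := by
  change (TensorProduct.lid ℂ A) (μ.rTensor A (Coalgebra.comul (R := ℂ) a)) = _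
  rw [← r.eq, map_sum, map_sum]
  simp

lemma Tl_counit : Tl (Coalgebra.counit (R := ℂ) (A := A)) = LinearMap.id := by
  ext a
  change (TensorProduct.lid ℂ A)
    ((Coalgebra.counit (R := ℂ)).rTensor A (Coalgebra.comul (R := ℂ) a)) = a
  rw [Coalgebra.rTensor_counit_comul]
  simp

lemma dualConv_apply {ι : Type*} {a : A} (ξ η : Module.Dual ℂ A) (r : Coalgebra.Repr ℂ a ι) :
    dualConv A ξ η a = ∑ i ∈ r.index, ξ (r.left i) * η (r.right i) := by
  change (LinearMap.mul' ℂ ℂ) (TensorProduct.map ξ η (Coalgebra.comul (R := ℂ) a)) = _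
  rw [← r.eq, map_sum, map_sum]
  simp

lemma Tl_comp (μ ν : Module.Dual ℂ A) : Tl μ ∘ₗ Tl ν = Tl (dualConv A ν μ) := by
  apply LinearMap.ext
  intro c
  let rc := ℛ ℂ c
  let rc1 : (i : A × A) → Coalgebra.Repr ℂ (rc.left i) (A × A) := fun i => ℛ ℂ (rc.left i)
  let rc2 : (i : A × A) → Coalgebra.Repr ℂ (rc.right i) (A × A) := fun i => ℛ ℂ (rc.right i)
  have hco := Coalgebra.sum_tmul_tmul_eq (R := ℂ) rc rc1 rc2
  have h := congrArg (tri3 (mk₃ (fun x y z => (ν x * μ y) • z)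
    (by intro x x' y z; simp only [map_add, add_mul, add_smul])
    (by intro c' x y z; simp only [map_smul, smul_eq_mul, mul_assoc, mul_smul])
    (by intro x y y' z; simp only [map_add, mul_add, add_smul])
    (by intro c' x y z; simp [map_smul, smul_eq_mul, mul_smul, mul_left_comm])
    (by intro x y z z'; simp only [smul_add])
    (by intro c' x y z; exact smul_comm _ _ _))) hco
  simp only [map_sum, tri3_tmul, mk₃_apply] at h
  calc (Tl μ ∘ₗ Tl ν) c = ∑ i ∈ rc.index, ∑ k ∈ (rc2 i).index,
        (ν (rc.left i) * μ ((rc2 i).left k)) • (rc2 i).right k := by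
          rw [LinearMap.comp_apply, Tl_apply ν rc, map_sum]
          refine Finset.sum_congr rfl fun i _ => ?_
          rw [map_smul, Tl_apply μ (rc2 i), Finset.smul_sum]
          refine Finset.sum_congr rfl fun k _ => ?_
          rw [smul_smul]
    _ = ∑ i ∈ rc.index, ∑ k ∈ (rc1 i).index,
        (ν ((rc1 i).left k) * μ ((rc1 i).right k)) • rc.right i := h.symm
    _ = Tl (dualConv A ν μ) c := by
          rw [Tl_apply (dualConv A ν μ) rc]
          refine Finset.sum_congr rfl fun i _ => ?_
          rw [dualConv_apply ν μ (rc1 i), Finset.sum_smul]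

lemma dualConv_eq_transpose (θ : Module.Dual ℂ A) :
    dualConv A θ = Module.Dual.transpose (R := ℂ) (Tl θ) := by
  apply LinearMap.ext
  intro η
  apply LinearMap.ext
  intro a
  rw [Module.Dual.transpose_apply, dualConv_apply θ η (ℛ ℂ a), LinearMap.comp_apply,
    Tl_apply θ (ℛ ℂ a), map_sum]
  simp

/-- Right multiplication operator. -/
abbrev Rf (x : A) : A →ₗ[ℂ] A := (LinearMap.mul ℂ A).flip x

lemma Rf_apply (x b : A) : Rf x b = b * x := rfl

lemma Rf_comp (x y : A) : Rf x ∘ₗ Rf y = Rf (y * x) := by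
  apply LinearMap.ext
  intro b
  simp [Rf_apply, mul_assoc]

lemma Rf_one : Rf (1 : A) = LinearMap.id := by
  apply LinearMap.ext
  intro b
  simp [Rf_apply]

section Finite

variable [Module.Finite ℂ A]

lemma trace_dualConv (θ : Module.Dual ℂ A) :
    LinearMap.trace ℂ (Module.Dual ℂ A) (dualConv A θ) = LinearMap.trace ℂ A (Tl θ) := by
  rw [dualConv_eq_transpose, LinearMap.trace_transpose']

/-- The distinguished element `χ ∈ A` with `ξ(χ) = tr(T_ξ)`. -/
def chi : A := (Module.evalEquiv ℂ A).symm ((LinearMap.trace ℂ A) ∘ₗ Tl)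

lemma apply_chi (ξ : Module.Dual ℂ A) :
    ξ (chi (A := A)) = LinearMap.trace ℂ A (Tl ξ) := by
  exact Module.apply_evalEquiv_symm_apply (R := ℂ) (M := A) ξ ((LinearMap.trace ℂ A) ∘ₗ Tl)

lemma Tl_apply_mul {ι κ : Type*} (μ : Module.Dual ℂ A) {x y : A} (rx : Coalgebra.Repr ℂ x ι)
    (ry : Coalgebra.Repr ℂ y κ) :
    Tl μ (x * y) = ∑ i ∈ rx.index, ∑ j ∈ ry.index,
      μ (rx.left i * ry.left j) • (rx.right i * ry.right j) := by
  rw [Tl_apply μ (mulRepr rx ry)]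
  exact Finset.sum_product _ _ _

lemma trace_Tl_mulRight (hinv : ∀ x : A, aS (aS x) = x) (ξ : Module.Dual ℂ A) (a : A) :
    LinearMap.trace ℂ A (Tl (ξ ∘ₗ Rf a)) =
      Coalgebra.counit (R := ℂ) a * LinearMap.trace ℂ A (Tl ξ) := by
  classical
  let ra := ℛ ℂ a
  let ra1 : (i : A × A) → Coalgebra.Repr ℂ (ra.left i) (A × A) := fun i => ℛ ℂ (ra.left i)
  let ra2 : (i : A × A) → Coalgebra.Repr ℂ (ra.right i) (A × A) := fun i => ℛ ℂ (ra.right i)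
  have hop : Tl (ξ ∘ₗ Rf a) =
      ∑ i ∈ ra.index, Rf (aS (ra.right i)) ∘ₗ (Tl ξ ∘ₗ Rf (ra.left i)) := by
    apply LinearMap.ext
    intro b
    let rb := ℛ ℂ b
    have hco := Coalgebra.sum_tmul_tmul_eq (R := ℂ) ra ra1 ra2
    have h := congrArg (tri3 (mk₃
      (fun x y z => ∑ j ∈ rb.index, ξ (rb.left j * x) • (rb.right j * (y * aS z)))
      (by intro x x' y z
          simp only [mul_add, map_add, add_smul, ← Finset.sum_add_distrib])
      (by intro c' x y z
          simp only [mul_smul_comm, map_smul, smul_eq_mul, mul_smul, Finset.smul_sum])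
      (by intro x y y' z
          simp only [mul_add, add_mul, smul_add, ← Finset.sum_add_distrib])
      (by intro c' x y z
          simp [smul_mul_assoc, mul_smul_comm, smul_smul, mul_comm, Finset.smul_sum])
      (by intro x y z z'
          simp only [map_add, mul_add, smul_add, ← Finset.sum_add_distrib])
      (by intro c' x y z
          simp [map_smul, smul_mul_assoc, mul_smul_comm, smul_smul, mul_comm,
            Finset.smul_sum]))) hco
    simp only [map_sum, tri3_tmul, mk₃_apply] at h
    calc Tl (ξ ∘ₗ Rf a) b
        = ∑ j ∈ rb.index, ξ (rb.left j * a) • rb.right j := by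
          rw [Tl_apply _ rb]
          simp [Rf_apply]
      _ = ∑ i ∈ ra.index, ∑ k ∈ (ra2 i).index, ∑ j ∈ rb.index,
            ξ (rb.left j * ra.left i) •
              (rb.right j * ((ra2 i).left k * aS ((ra2 i).right k))) := by
          have hcollapse : ∀ i ∈ ra.index, (∑ k ∈ (ra2 i).index, ∑ j ∈ rb.index,
              ξ (rb.left j * ra.left i) •
                (rb.right j * ((ra2 i).left k * aS ((ra2 i).right k)))) =
              ∑ j ∈ rb.index, (Coalgebra.counit (R := ℂ) (ra.right i) *
                ξ (rb.left j * ra.left i)) • rb.right j := by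
            intro i _
            rw [Finset.sum_comm]
            refine Finset.sum_congr rfl fun j _ => ?_
            rw [← Finset.smul_sum, ← Finset.mul_sum,
              HopfAlgebra.sum_mul_antipode_eq_smul (ra2 i), mul_smul_comm, mul_one,
              smul_smul, mul_comm (ξ (rb.left j * ra.left i))]
          rw [Finset.sum_congr rfl hcollapse, Finset.sum_comm]
          refine Finset.sum_congr rfl fun j _ => ?_
          rw [← Finset.sum_smul]
          congr 1
          conv_lhs => rw [← sum_counit_smul_left ra]
          rw [Finset.mul_sum, map_sum]
          refine Finset.sum_congr rfl fun i _ => ?_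
          rw [mul_smul_comm, map_smul, smul_eq_mul]
      _ = ∑ i ∈ ra.index, ∑ k ∈ (ra1 i).index, ∑ j ∈ rb.index,
            ξ (rb.left j * (ra1 i).left k) •
              (rb.right j * ((ra1 i).right k * aS (ra.right i))) := h.symm
      _ = (∑ i ∈ ra.index, Rf (aS (ra.right i)) ∘ₗ (Tl ξ ∘ₗ Rf (ra.left i))) b := by
          rw [LinearMap.sum_apply]
          refine Finset.sum_congr rfl fun i _ => Eq.symm ?_
          rw [LinearMap.comp_apply, LinearMap.comp_apply, Rf_apply, Rf_apply,
            Tl_apply_mul ξ rb (ra1 i)]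
          simp only [Finset.sum_mul]
          rw [Finset.sum_comm]
          refine Finset.sum_congr rfl fun k _ => Finset.sum_congr rfl fun j _ => ?_
          rw [smul_mul_assoc, mul_assoc]
  rw [hop, map_sum]
  have hterm : ∀ i ∈ ra.index,
      LinearMap.trace ℂ A (Rf (aS (ra.right i)) ∘ₗ (Tl ξ ∘ₗ Rf (ra.left i))) =
      LinearMap.trace ℂ A (Tl ξ ∘ₗ Rf (aS (ra.right i) * ra.left i)) := by
    intro i _
    rw [LinearMap.trace_comp_comm', LinearMap.comp_assoc, Rf_comp]
  rw [Finset.sum_congr rfl hterm]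
  have hlin : ∀ x : A, Tl ξ ∘ₗ Rf x =
      ((LinearMap.llcomp ℂ A A A (Tl ξ)) ∘ₗ (LinearMap.mul ℂ A).flip) x := fun x => rfl
  calc ∑ i ∈ ra.index, LinearMap.trace ℂ A (Tl ξ ∘ₗ Rf (aS (ra.right i) * ra.left i))
      = LinearMap.trace ℂ A (((LinearMap.llcomp ℂ A A A (Tl ξ)) ∘ₗ (LinearMap.mul ℂ A).flip)
          (∑ i ∈ ra.index, aS (ra.right i) * ra.left i)) := by
        rw [map_sum, map_sum]
        exact Finset.sum_congr rfl fun i _ => by rw [hlin]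
    _ = Coalgebra.counit (R := ℂ) a * LinearMap.trace ℂ A (Tl ξ) := by
        rw [sum_antipode_right_mul_left hinv ra, map_smul, map_smul]
        have : ((LinearMap.llcomp ℂ A A A (Tl ξ)) ∘ₗ (LinearMap.mul ℂ A).flip) (1 : A) =
            Tl ξ := by
          rw [← hlin, Rf_one]
          exact LinearMap.comp_id _
        rw [this, smul_eq_mul]

lemma chi_mul (hinv : ∀ x : A, aS (aS x) = x) (a : A) :
    chi * a = Coalgebra.counit (R := ℂ) a • chi (A := A) := by
  rw [← sub_eq_zero]
  refine (Module.forall_dual_apply_eq_zero_iff ℂ _).mp fun φ => ?_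
  have h1 : φ (chi * a) = Coalgebra.counit (R := ℂ) a * φ (chi (A := A)) := by
    have h0 : φ (chi * a) = (φ ∘ₗ Rf a) (chi (A := A)) := rfl
    rw [h0, apply_chi (φ ∘ₗ Rf a), trace_Tl_mulRight hinv, ← apply_chi]
  rw [map_sub, h1, map_smul, smul_eq_mul, sub_self]

/-- The regular character `λ(x) = tr(L_x)`. -/
def lam : Module.Dual ℂ A := (LinearMap.trace ℂ A) ∘ₗ (LinearMap.mul ℂ A)

lemma lam_apply (x : A) : lam x = LinearMap.trace ℂ A (LinearMap.mul ℂ A x) := rfl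

lemma lam_Tl (hinv : ∀ x : A, aS (aS x) = x) (ξ : Module.Dual ℂ A) (a : A) :
    lam (Tl ξ a) = ξ 1 * lam a := by
  classical
  obtain ⟨s, hs⟩ := TensorProduct.exists_finset (R := ℂ)
    ((TensorProduct.dualDistribEquiv ℂ A A).symm
      (ξ ∘ₗ (LinearMap.mul' ℂ A) ∘ₗ (LinearMap.lTensor A aS)))
  have hkey : ∀ u v : A, (∑ p ∈ s, p.1 u * p.2 v) = ξ (u * aS v) := by
    intro u v
    have h2 := congrArg (TensorProduct.dualDistribEquiv ℂ A A) hs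
    rw [LinearEquiv.apply_symm_apply] at h2
    have hDD : ∀ t, (TensorProduct.dualDistribEquiv ℂ A A) t =
        TensorProduct.dualDistrib ℂ A A t := fun t => rfl
    rw [hDD, map_sum] at h2
    have h3 := congrArg (fun φ : Module.Dual ℂ (A ⊗[ℂ] A) => φ (u ⊗ₜ[ℂ] v)) h2
    simp only [LinearMap.sum_apply, LinearMap.comp_apply, LinearMap.mul'_apply,
      LinearMap.lTensor_tmul, TensorProduct.dualDistrib_apply] at h3
    exact h3.symm
  let ra := ℛ ℂ a
  have hop : LinearMap.mul ℂ A (Tl ξ a) =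
      ∑ p ∈ s, Tl p.1 ∘ₗ (LinearMap.mul ℂ A a ∘ₗ Tl p.2) := by
    apply LinearMap.ext
    intro b
    let rb := ℛ ℂ b
    let rb1 : (i : A × A) → Coalgebra.Repr ℂ (rb.left i) (A × A) := fun i => ℛ ℂ (rb.left i)
    let rb2 : (i : A × A) → Coalgebra.Repr ℂ (rb.right i) (A × A) := fun i => ℛ ℂ (rb.right i)
    have hco := Coalgebra.sum_tmul_tmul_eq (R := ℂ) rb rb1 rb2
    have h := congrArg (tri3 (mk₃
      (fun x y z => ∑ j ∈ ra.index, ξ (ra.left j * (y * aS x)) • (ra.right j * z))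
      (by intro x x' y z
          simp only [map_add, mul_add, map_add, add_smul, ← Finset.sum_add_distrib])
      (by intro c' x y z
          simp [map_smul, mul_smul_comm, smul_smul, mul_comm, Finset.smul_sum])
      (by intro x y y' z
          simp only [add_mul, mul_add, map_add, add_smul, ← Finset.sum_add_distrib])
      (by intro c' x y z
          simp [smul_mul_assoc, mul_smul_comm, smul_smul, mul_comm, Finset.smul_sum])
      (by intro x y z z'
          simp only [mul_add, smul_add, ← Finset.sum_add_distrib])
      (by intro c' x y z
          simp [mul_smul_comm, smul_smul, mul_comm, Finset.smul_sum]))) hco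
    simp only [map_sum, tri3_tmul, mk₃_apply] at h
    calc LinearMap.mul ℂ A (Tl ξ a) b
        = ∑ j ∈ ra.index, ξ (ra.left j) • (ra.right j * b) := by
          rw [LinearMap.mul_apply', Tl_apply ξ ra, Finset.sum_mul]
          exact Finset.sum_congr rfl fun j _ => smul_mul_assoc _ _ _
      _ = ∑ i ∈ rb.index, ∑ k ∈ (rb1 i).index, ∑ j ∈ ra.index,
            ξ (ra.left j * ((rb1 i).right k * aS ((rb1 i).left k))) •
              (ra.right j * rb.right i) := by
          refine Eq.symm ?_
          have hcollapse : ∀ i ∈ rb.index, (∑ k ∈ (rb1 i).index, ∑ j ∈ ra.index,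
              ξ (ra.left j * ((rb1 i).right k * aS ((rb1 i).left k))) •
                (ra.right j * rb.right i)) =
              ∑ j ∈ ra.index, (Coalgebra.counit (R := ℂ) (rb.left i) * ξ (ra.left j)) •
                (ra.right j * rb.right i) := by
            intro i _
            rw [Finset.sum_comm]
            refine Finset.sum_congr rfl fun j _ => ?_
            rw [← Finset.sum_smul]
            congr 1
            rw [← map_sum, ← Finset.mul_sum, sum_right_mul_antipode_left hinv (rb1 i),
              mul_smul_comm, mul_one, map_smul, smul_eq_mul]
          rw [Finset.sum_congr rfl hcollapse, Finset.sum_comm]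
          refine Finset.sum_congr rfl fun j _ => ?_
          have : ∀ i ∈ rb.index, (Coalgebra.counit (R := ℂ) (rb.left i) * ξ (ra.left j)) •
              (ra.right j * rb.right i) =
              ξ (ra.left j) • (ra.right j * (Coalgebra.counit (R := ℂ) (rb.left i) •
                rb.right i)) := by
            intro i _
            rw [mul_smul_comm, mul_comm, mul_smul, smul_comm]
          rw [Finset.sum_congr rfl this, ← Finset.smul_sum, ← Finset.mul_sum,
            sum_counit_smul_right rb]
      _ = ∑ i ∈ rb.index, ∑ k ∈ (rb2 i).index, ∑ j ∈ ra.index,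
            ξ (ra.left j * ((rb2 i).left k * aS (rb.left i))) •
              (ra.right j * (rb2 i).right k) := h
      _ = (∑ p ∈ s, Tl p.1 ∘ₗ (LinearMap.mul ℂ A a ∘ₗ Tl p.2)) b := by
          refine Eq.symm ?_
          rw [LinearMap.sum_apply]
          have hper : ∀ p ∈ s, (Tl p.1 ∘ₗ (LinearMap.mul ℂ A a ∘ₗ Tl p.2)) b
              = ∑ i ∈ rb.index, ∑ k ∈ (rb2 i).index, ∑ j ∈ ra.index,
                (p.2 (rb.left i) * p.1 (ra.left j * (rb2 i).left k)) •
                  (ra.right j * (rb2 i).right k) := by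
            intro p _
            rw [LinearMap.comp_apply, LinearMap.comp_apply, Tl_apply p.2 rb, map_sum, map_sum]
            refine Finset.sum_congr rfl fun i _ => ?_
            rw [map_smul, map_smul, LinearMap.mul_apply', Tl_apply_mul p.1 ra (rb2 i),
              Finset.smul_sum, Finset.sum_comm]
            refine Finset.sum_congr rfl fun k _ => ?_
            rw [Finset.smul_sum]
            refine Finset.sum_congr rfl fun j _ => ?_
            rw [smul_smul]
          rw [Finset.sum_congr rfl hper, Finset.sum_comm]
          refine Finset.sum_congr rfl fun i _ => ?_
          rw [Finset.sum_comm]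
          refine Finset.sum_congr rfl fun k _ => ?_
          rw [Finset.sum_comm]
          refine Finset.sum_congr rfl fun j _ => ?_
          rw [← Finset.sum_smul]
          congr 1
          rw [Finset.sum_congr rfl fun p (_ : p ∈ s) => mul_comm (p.2 (rb.left i)) _,
            hkey, mul_assoc]
  rw [lam_apply, hop, map_sum]
  have hper2 : ∀ p ∈ s, LinearMap.trace ℂ A (Tl p.1 ∘ₗ (LinearMap.mul ℂ A a ∘ₗ Tl p.2)) =
      LinearMap.trace ℂ A (((LinearMap.llcomp ℂ A A A (LinearMap.mul ℂ A a)) ∘ₗ Tl)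
        (dualConv A p.1 p.2)) := by
    intro p _
    rw [LinearMap.trace_comp_comm', LinearMap.comp_assoc, Tl_comp]
    rfl
  rw [Finset.sum_congr rfl hper2, ← map_sum, ← map_sum]
  have hconv : (∑ p ∈ s, dualConv A p.1 p.2) =
      ξ 1 • (Coalgebra.counit (R := ℂ) (A := A)) := by
    apply LinearMap.ext
    intro x
    let rx := ℛ ℂ x
    rw [LinearMap.sum_apply]
    calc ∑ p ∈ s, dualConv A p.1 p.2 x
        = ∑ i ∈ rx.index, ∑ p ∈ s, p.1 (rx.left i) * p.2 (rx.right i) := by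
          rw [Finset.sum_congr rfl fun p (_ : p ∈ s) => dualConv_apply p.1 p.2 rx,
            Finset.sum_comm]
      _ = ∑ i ∈ rx.index, ξ (rx.left i * aS (rx.right i)) :=
          Finset.sum_congr rfl fun i _ => hkey _ _
      _ = ξ (Coalgebra.counit (R := ℂ) x • 1) := by
          rw [← map_sum, HopfAlgebra.sum_mul_antipode_eq_smul rx]
      _ = (ξ 1 • (Coalgebra.counit (R := ℂ) (A := A))) x := by
          rw [map_smul, smul_eq_mul, LinearMap.smul_apply, smul_eq_mul, mul_comm]
  rw [hconv, map_smul, map_smul]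
  have hid : ((LinearMap.llcomp ℂ A A A (LinearMap.mul ℂ A a)) ∘ₗ Tl)
      (Coalgebra.counit (R := ℂ) (A := A)) = LinearMap.mul ℂ A a := by
    change LinearMap.mul ℂ A a ∘ₗ Tl (Coalgebra.counit (R := ℂ)) = _
    rw [Tl_counit, LinearMap.comp_id]
  rw [hid, smul_eq_mul, lam_apply]

lemma sum_lam_smul {ι : Type*} (hinv : ∀ x : A, aS (aS x) = x) {x : A} (r : Coalgebra.Repr ℂ x ι) :
    ∑ i ∈ r.index, lam (r.right i) • r.left i = lam x • (1 : A) := by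
  rw [← sub_eq_zero]
  refine (Module.forall_dual_apply_eq_zero_iff ℂ _).mp fun φ => ?_
  have h := lam_Tl hinv φ x
  rw [Tl_apply φ r, map_sum] at h
  simp only [map_smul, smul_eq_mul] at h
  rw [map_sub, map_sum, map_smul]
  simp only [map_smul, smul_eq_mul]
  rw [sub_eq_zero, Finset.sum_congr rfl fun i (_ : i ∈ r.index) =>
    mul_comm (lam (r.right i)) (φ (r.left i)), h, mul_comm]

set_option maxHeartbeats 1000000 in
lemma sum_lam_smul_mul {ι κ : Type*} (hinv : ∀ x : A, aS (aS x) = x) {x y : A}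
    (rx : Coalgebra.Repr ℂ x ι) (ry : Coalgebra.Repr ℂ y κ) :
    ∑ k ∈ rx.index, ∑ j ∈ ry.index,
      lam (rx.right k * ry.right j) • (rx.left k * ry.left j) = lam (x * y) • (1 : A) := by
  calc ∑ k ∈ rx.index, ∑ j ∈ ry.index,
      lam (rx.right k * ry.right j) • (rx.left k * ry.left j)
      = ∑ p ∈ (mulRepr rx ry).index,
          lam ((mulRepr rx ry).right p) • (mulRepr rx ry).left p :=
        (Finset.sum_product rx.index ry.index
          (fun p => lam (rx.right p.1 * ry.right p.2) • (rx.left p.1 * ry.left p.2))).symm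
    _ = lam (x * y) • (1 : A) := sum_lam_smul hinv (mulRepr rx ry)

lemma key_B {ι : Type*} (hinv : ∀ x : A, aS (aS x) = x) (b : A) (rc : Coalgebra.Repr ℂ (chi (A := A)) ι) :
    ∑ i ∈ rc.index, lam (rc.right i * b) • aS (rc.left i) =
      lam (chi (A := A)) • b := by
  classical
  let rb := ℛ ℂ b
  let rc1 : (i : ι) → Coalgebra.Repr ℂ (rc.left i) (A × A) := fun i => ℛ ℂ (rc.left i)
  let rc2 : (i : ι) → Coalgebra.Repr ℂ (rc.right i) (A × A) := fun i => ℛ ℂ (rc.right i)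
  have hco := Coalgebra.sum_tmul_tmul_eq (R := ℂ) rc rc1 rc2
  have h := congrArg (tri3 (mk₃
    (fun x y z => ∑ j ∈ rb.index, lam (z * rb.right j) • (aS x * (y * rb.left j)))
    (by intro x x' y z
        simp only [map_add, add_mul, smul_add, ← Finset.sum_add_distrib])
    (by intro c' x y z
        simp [map_smul, smul_mul_assoc, smul_smul, mul_comm, Finset.smul_sum])
    (by intro x y y' z
        simp only [add_mul, mul_add, smul_add, ← Finset.sum_add_distrib])
    (by intro c' x y z
        simp [smul_mul_assoc, mul_smul_comm, smul_smul, mul_comm, Finset.smul_sum])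
    (by intro x y z z'
        simp only [add_mul, map_add, add_smul, ← Finset.sum_add_distrib])
    (by intro c' x y z
        simp [smul_mul_assoc, map_smul, smul_smul, mul_comm, Finset.smul_sum]))) hco
  simp only [map_sum, tri3_tmul, mk₃_apply] at h
  calc ∑ i ∈ rc.index, lam (rc.right i * b) • aS (rc.left i)
      = ∑ i ∈ rc.index, ∑ k ∈ (rc2 i).index, ∑ j ∈ rb.index,
          lam ((rc2 i).right k * rb.right j) • (aS (rc.left i) * ((rc2 i).left k * rb.left j)) := by
        refine Finset.sum_congr rfl fun i _ => ?_
        have h1 : ∑ k ∈ (rc2 i).index, ∑ j ∈ rb.index,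
            lam ((rc2 i).right k * rb.right j) •
              (aS (rc.left i) * ((rc2 i).left k * rb.left j)) =
            aS (rc.left i) * ∑ k ∈ (rc2 i).index, ∑ j ∈ rb.index,
              lam ((rc2 i).right k * rb.right j) • ((rc2 i).left k * rb.left j) := by
          rw [Finset.mul_sum]
          refine Finset.sum_congr rfl fun k _ => ?_
          rw [Finset.mul_sum]
          exact Finset.sum_congr rfl fun j _ => (mul_smul_comm _ _ _).symm
        have h2 : ∑ k ∈ (rc2 i).index, ∑ j ∈ rb.index,
            lam ((rc2 i).right k * rb.right j) • ((rc2 i).left k * rb.left j) =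
            lam (rc.right i * b) • (1 : A) := by
          exact sum_lam_smul_mul hinv (rc2 i) rb
        rw [h1, h2, mul_smul_comm, mul_one]
      _ = ∑ i ∈ rc.index, ∑ k ∈ (rc1 i).index, ∑ j ∈ rb.index,
          lam (rc.right i * rb.right j) •
            (aS ((rc1 i).left k) * ((rc1 i).right k * rb.left j)) := h.symm
      _ = lam (chi (A := A)) • b := by
        have h3 : ∀ i ∈ rc.index, (∑ k ∈ (rc1 i).index, ∑ j ∈ rb.index,
            lam (rc.right i * rb.right j) •
              (aS ((rc1 i).left k) * ((rc1 i).right k * rb.left j))) =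
            ∑ j ∈ rb.index, (Coalgebra.counit (R := ℂ) (rc.left i) *
              lam (rc.right i * rb.right j)) • rb.left j := by
          intro i _
          rw [Finset.sum_comm]
          refine Finset.sum_congr rfl fun j _ => ?_
          rw [← Finset.smul_sum, sum_antipode_sandwich (rc1 i) (rb.left j), smul_smul,
            mul_comm (lam (rc.right i * rb.right j))]
        rw [Finset.sum_congr rfl h3, Finset.sum_comm]
        have h4 : ∀ j ∈ rb.index, (∑ i ∈ rc.index, (Coalgebra.counit (R := ℂ) (rc.left i) *
            lam (rc.right i * rb.right j)) • rb.left j) =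
            (Coalgebra.counit (R := ℂ) (rb.right j) * lam (chi (A := A))) • rb.left j := by
          intro j _
          rw [← Finset.sum_smul]
          congr 1
          have h5 : ∑ i ∈ rc.index, Coalgebra.counit (R := ℂ) (rc.left i) *
              lam (rc.right i * rb.right j) = lam (chi * rb.right j) := by
            conv_rhs => rw [← sum_counit_smul_right rc, Finset.sum_mul]
            rw [map_sum]
            refine Finset.sum_congr rfl fun i _ => ?_
            rw [smul_mul_assoc, map_smul, smul_eq_mul]
          rw [h5, chi_mul hinv, map_smul, smul_eq_mul]
        rw [Finset.sum_congr rfl h4]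
        have h6 : ∀ j ∈ rb.index, (Coalgebra.counit (R := ℂ) (rb.right j) *
            lam (chi (A := A))) • rb.left j = lam (chi (A := A)) •
              (Coalgebra.counit (R := ℂ) (rb.right j) • rb.left j) := by
          intro j _
          rw [mul_comm, mul_smul]
        rw [Finset.sum_congr rfl h6, ← Finset.smul_sum, sum_counit_smul_left rb]

lemma counit_chi : Coalgebra.counit (R := ℂ) (chi (A := A)) = (Module.finrank ℂ A : ℂ) := by
  rw [apply_chi, Tl_counit, LinearMap.trace_id]

lemma lam_chi (hinv : ∀ x : A, aS (aS x) = x) :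
    lam (chi (A := A)) = (Module.finrank ℂ A : ℂ) := by
  rw [lam_apply]
  have h1 : LinearMap.mul ℂ A (chi (A := A)) =
      (LinearMap.toSpanSingleton ℂ A (chi (A := A))) ∘ₗ (Coalgebra.counit (R := ℂ)) := by
    apply LinearMap.ext
    intro x
    rw [LinearMap.mul_apply', chi_mul hinv x]
    simp [LinearMap.toSpanSingleton_apply]
  rw [h1, LinearMap.trace_comp_comm']
  have h2 : (Coalgebra.counit (R := ℂ)) ∘ₗ (LinearMap.toSpanSingleton ℂ A (chi (A := A))) =
      (Coalgebra.counit (R := ℂ) (chi (A := A))) • LinearMap.id := by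
    apply LinearMap.ext
    intro c
    simp [LinearMap.toSpanSingleton_apply, mul_comm]
  rw [h2, map_smul, LinearMap.trace_id, Module.finrank_self, Nat.cast_one, smul_eq_mul,
    mul_one, counit_chi]

end Finite

end HopfAux

end

/-- The cometric of a finite-dimensional involutory Hopf algebra over `ℂ` is a
nondegenerate bilinear form on the dual Hopf algebra. -/
theorem hopfCometric_nondegenerate
    (A : Type*) [Ring A] [HopfAlgebra ℂ A] [Module.Finite ℂ A]
    (hinv : ∀ a : A, HopfAlgebra.antipode (R := ℂ) (HopfAlgebra.antipode (R := ℂ) a) = a) :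
    (hopfCometric A).Nondegenerate := by
  classical
  by_cases hA : Subsingleton A
  · constructor <;> intro ξ _ <;>
      (apply LinearMap.ext; intro a; rw [Subsingleton.elim a (0 : A)]; simp)
  · rw [not_subsingleton_iff_nontrivial] at hA
    have hform : ∀ ξ η : Module.Dual ℂ A,
        hopfCometric A ξ η = dualConv A ξ η (HopfAux.chi (A := A)) := by
      intro ξ η
      have h1 : hopfCometric A ξ η =
          LinearMap.trace ℂ (Module.Dual ℂ A) (dualConv A (dualConv A ξ η)) := rfl
      rw [h1, HopfAux.trace_dualConv, ← HopfAux.apply_chi]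
    have hne : HopfAux.lam (HopfAux.chi (A := A)) ≠ 0 := by
      rw [HopfAux.lam_chi (A := A) hinv]
      exact_mod_cast Nat.cast_ne_zero.mpr (Module.finrank_pos (R := ℂ) (M := A)).ne'
    have hsepl : ∀ ξ : Module.Dual ℂ A, (∀ η, hopfCometric A ξ η = 0) → ξ = 0 := by
      intro ξ hξ
      have hb : ∀ b : A, ξ (HopfAux.aS b) = 0 := by
        intro b
        set rc := ℛ ℂ (HopfAux.chi (A := A)) with hrc
        have hk := HopfAux.key_B hinv b rc
        have h2 := congrArg (ξ ∘ₗ (HopfAux.aS (A := A))) hk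
        simp only [map_sum, map_smul, LinearMap.comp_apply, hinv, smul_eq_mul] at h2
        have h3 := hξ (HopfAux.lam ∘ₗ HopfAux.Rf b)
        rw [hform, HopfAux.dualConv_apply _ _ rc] at h3
        simp only [LinearMap.comp_apply, HopfAux.Rf_apply] at h3
        rw [Finset.sum_congr rfl (fun i _ =>
          mul_comm (HopfAux.lam (rc.right i * b)) (ξ (rc.left i))), h3] at h2
        rcases mul_eq_zero.mp h2.symm with h | h
        · exact absurd h hne
        · exact h
      apply LinearMap.ext
      intro c
      have := hb (HopfAux.aS c)
      rw [hinv] at this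
      simpa using this
    constructor
    · exact hsepl
    · intro η hη
      have hinj : Function.Injective (hopfCometric A) :=
        (injective_iff_map_eq_zero (hopfCometric A)).mpr fun ξ h0 =>
          hsepl ξ fun η' => by rw [h0]; rfl
      have hfr : Module.finrank ℂ (Module.Dual ℂ A) =
          Module.finrank ℂ (Module.Dual ℂ (Module.Dual ℂ A)) :=
        (Subspace.dual_finrank_eq).symm
      have hsurj : Function.Surjective (hopfCometric A) :=
        (LinearMap.injective_iff_surjective_of_finrank_eq_finrank hfr).mp hinj
      have hzero : ∀ φ : Module.Dual ℂ (Module.Dual ℂ A), φ η = 0 := by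
        intro φ
        obtain ⟨ξ, rfl⟩ := hsurj φ
        exact hη ξ
      exact (Module.forall_dual_apply_eq_zero_iff ℂ η).mp hzero
end

section
/- For every n ≥ 1 and all a₁,…,aₙ ∈ A: tr(L_{S(a₁)} ∘ L_{S(a₂)} ∘ ⋯ ∘ L_{S(aₙ)}) = tr(L_{aₙ} ∘ ⋯ ∘ L_{a₂} ∘ L_{a₁}). (In components this is the relation C_{x₁x₂⋯xₙ} S^{x₁}{}_{y₁} S^{x₂}{}_{y₂} ⋯ S^{xₙ}{}_{yₙ} = C_{yₙ⋯y₂y₁}.) -/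
open TensorProduct Coalgebra HopfAlgebra LinearMap

noncomputable section AuxHopf

variable {A : Type*} [Ring A] [HopfAlgebra ℂ A]

noncomputable abbrev S' {A : Type*} [Ring A] [HopfAlgebra ℂ A] : A →ₗ[ℂ] A :=
  HopfAlgebra.antipode (R := ℂ)

lemma repr_sum_counit_smul_left {a : A} {ι : Type*} (r : Repr ℂ a ι) :
    ∑ i ∈ r.index, (counit (R := ℂ) (r.right i)) • r.left i = a := by
  have h := Coalgebra.sum_tmul_counit_eq (R := ℂ) r
  calc ∑ i ∈ r.index, (counit (R := ℂ) (r.right i)) • r.left i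
      = TensorProduct.rid ℂ A (∑ i ∈ r.index, r.left i ⊗ₜ[ℂ] (counit (R := ℂ) (r.right i))) := by
        rw [map_sum]; simp only [TensorProduct.rid_tmul]
    _ = TensorProduct.rid ℂ A (a ⊗ₜ[ℂ] 1) := by rw [h]
    _ = a := by simp only [TensorProduct.rid_tmul, one_smul]

lemma repr_sum_counit_smul_right {a : A} {ι : Type*} (r : Repr ℂ a ι) :
    ∑ i ∈ r.index, (counit (R := ℂ) (r.left i)) • r.right i = a := by
  have h := Coalgebra.sum_counit_tmul_eq (R := ℂ) r
  calc ∑ i ∈ r.index, (counit (R := ℂ) (r.left i)) • r.right i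
      = TensorProduct.lid ℂ A (∑ i ∈ r.index, (counit (R := ℂ) (r.left i)) ⊗ₜ[ℂ] r.right i) := by
        rw [map_sum]; simp only [TensorProduct.lid_tmul]
    _ = TensorProduct.lid ℂ A ((1 : ℂ) ⊗ₜ[ℂ] a) := by rw [h]
    _ = a := by simp only [TensorProduct.lid_tmul, one_smul]

lemma comul_one' : comul (R := ℂ) (1 : A) = 1 ⊗ₜ[ℂ] 1 := by
  have : comul (R := ℂ) (1 : A) = 1 := map_one (Bialgebra.comulAlgHom ℂ A)
  rw [this, Algebra.TensorProduct.one_def]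

lemma counit_one' : counit (R := ℂ) (1 : A) = 1 := by
  exact_mod_cast Bialgebra.counit_natCast (R := ℂ) (A := A) 1

lemma antipode_one' : S' (1 : A) = 1 := by
  have h := HopfAlgebra.mul_antipode_rTensor_comul_apply (R := ℂ) (a := (1 : A))
  rw [comul_one'] at h
  simpa [counit_one'] using h

/-- A representation of `comul (x * y)` built from representations of `comul x`, `comul y`. -/
noncomputable def reprMul {x y : A} {ι κ : Type*} (rx : Repr ℂ x ι) (ry : Repr ℂ y κ) :
    Repr ℂ (x * y) (ι × κ) where
  index := rx.index ×ˢ ry.index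
  left p := rx.left p.1 * ry.left p.2
  right p := rx.right p.1 * ry.right p.2
  eq := by
    rw [Finset.sum_product]
    rw [Bialgebra.comul_mul, ← rx.eq, ← ry.eq, Finset.sum_mul_sum]
    simp only [Algebra.TensorProduct.tmul_mul_tmul]

/-- Sweedler: `∑ S(x₁) x₂ ⊗ x₃ = 1 ⊗ x`. -/
lemma E1 {a : A} {ι κ : Type*} (r : Repr ℂ a ι) (r2 : ∀ i : ι, Repr ℂ (r.right i) κ) :
    ∑ i ∈ r.index, ∑ k ∈ (r2 i).index,
      (S' (r.left i) * (r2 i).left k) ⊗ₜ[ℂ] (r2 i).right k = (1 : A) ⊗ₜ[ℂ] a := by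
  classical
  set L : A ⊗[ℂ] (A ⊗[ℂ] A) →ₗ[ℂ] A ⊗[ℂ] A :=
    (LinearMap.rTensor A (LinearMap.mul' ℂ A ∘ₗ LinearMap.rTensor A (S' (A := A)))) ∘ₗ
      (TensorProduct.assoc ℂ A A A).symm.toLinearMap with hL
  have hnest : (LinearMap.lTensor A (comul (R := ℂ))) (comul (R := ℂ) a)
      = ∑ i ∈ r.index, ∑ k ∈ (r2 i).index,
          r.left i ⊗ₜ[ℂ] ((r2 i).left k ⊗ₜ[ℂ] (r2 i).right k) := by
    rw [← r.eq, map_sum]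
    refine Finset.sum_congr rfl fun i _ => ?_
    rw [LinearMap.lTensor_tmul, ← (r2 i).eq, TensorProduct.tmul_sum]
  have hco : (TensorProduct.assoc ℂ A A A).symm
      ((LinearMap.lTensor A (comul (R := ℂ))) (comul (R := ℂ) a))
      = (LinearMap.rTensor A (comul (R := ℂ))) (comul (R := ℂ) a) :=
    Coalgebra.coassoc_symm_apply a
  have h1 : L ((LinearMap.lTensor A (comul (R := ℂ))) (comul (R := ℂ) a))
      = ∑ i ∈ r.index, ∑ k ∈ (r2 i).index,
        (S' (r.left i) * (r2 i).left k) ⊗ₜ[ℂ] (r2 i).right k := by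
    rw [hnest, map_sum]
    refine Finset.sum_congr rfl fun i _ => ?_
    rw [map_sum]
    refine Finset.sum_congr rfl fun k _ => ?_
    simp [hL, TensorProduct.assoc_symm_tmul]
  have h2 : L ((LinearMap.lTensor A (comul (R := ℂ))) (comul (R := ℂ) a))
      = (1 : A) ⊗ₜ[ℂ] a := by
    have hL2 : L ((LinearMap.lTensor A (comul (R := ℂ))) (comul (R := ℂ) a))
        = (LinearMap.rTensor A (LinearMap.mul' ℂ A ∘ₗ LinearMap.rTensor A (S' (A := A))))
            ((LinearMap.rTensor A (comul (R := ℂ))) (comul (R := ℂ) a)) := by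
      rw [hL, LinearMap.comp_apply]
      exact congrArg _ hco
    rw [hL2]
    rw [← r.eq, map_sum, map_sum]
    have hterm : ∀ i ∈ r.index,
        (LinearMap.rTensor A (LinearMap.mul' ℂ A ∘ₗ LinearMap.rTensor A (S' (A := A))))
          ((LinearMap.rTensor A (comul (R := ℂ))) (r.left i ⊗ₜ[ℂ] r.right i))
        = (counit (R := ℂ) (r.left i)) • ((1 : A) ⊗ₜ[ℂ] r.right i) := by
      intro i _
      rw [LinearMap.rTensor_tmul, LinearMap.rTensor_tmul]
      rw [LinearMap.comp_apply]
      rw [HopfAlgebra.mul_antipode_rTensor_comul_apply (R := ℂ)]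
      rw [Algebra.algebraMap_eq_smul_one, TensorProduct.smul_tmul']
    rw [Finset.sum_congr rfl hterm]
    calc ∑ i ∈ r.index, (counit (R := ℂ) (r.left i)) • ((1 : A) ⊗ₜ[ℂ] r.right i)
        = (1 : A) ⊗ₜ[ℂ] (∑ i ∈ r.index, (counit (R := ℂ) (r.left i)) • r.right i) := by
          rw [TensorProduct.tmul_sum]
          refine Finset.sum_congr rfl fun i _ => ?_
          rw [TensorProduct.tmul_smul]
      _ = (1 : A) ⊗ₜ[ℂ] a := by rw [repr_sum_counit_smul_right r]
  rw [← h1, h2]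

/-- Sweedler: `∑ x₁ ⊗ x₂ S(x₃) = x ⊗ 1`,
with the first two legs coming from representations of the left legs. -/
lemma E2 {x : A} {ι κ : Type*} (r : Repr ℂ x ι) (r1 : ∀ t : ι, Repr ℂ (r.left t) κ) :
    ∑ t ∈ r.index, ∑ s ∈ (r1 t).index,
      (r1 t).left s ⊗ₜ[ℂ] ((r1 t).right s * S' (r.right t)) = x ⊗ₜ[ℂ] (1 : A) := by
  classical
  set L : (A ⊗[ℂ] A) ⊗[ℂ] A →ₗ[ℂ] A ⊗[ℂ] A :=
    (LinearMap.lTensor A (LinearMap.mul' ℂ A ∘ₗ LinearMap.lTensor A (S' (A := A)))) ∘ₗ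
      (TensorProduct.assoc ℂ A A A).toLinearMap with hL
  have hnest : (LinearMap.rTensor A (comul (R := ℂ))) (comul (R := ℂ) x)
      = ∑ t ∈ r.index, ∑ s ∈ (r1 t).index,
          ((r1 t).left s ⊗ₜ[ℂ] (r1 t).right s) ⊗ₜ[ℂ] r.right t := by
    rw [← r.eq, map_sum]
    refine Finset.sum_congr rfl fun t _ => ?_
    rw [LinearMap.rTensor_tmul, ← (r1 t).eq, TensorProduct.sum_tmul]
  have h1 : L ((LinearMap.rTensor A (comul (R := ℂ))) (comul (R := ℂ) x))
      = ∑ t ∈ r.index, ∑ s ∈ (r1 t).index,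
        (r1 t).left s ⊗ₜ[ℂ] ((r1 t).right s * S' (r.right t)) := by
    rw [hnest, map_sum]
    refine Finset.sum_congr rfl fun t _ => ?_
    rw [map_sum]
    refine Finset.sum_congr rfl fun s _ => ?_
    simp [hL, TensorProduct.assoc_tmul]
  have hco : (TensorProduct.assoc ℂ A A A)
      ((LinearMap.rTensor A (comul (R := ℂ))) (comul (R := ℂ) x))
      = (LinearMap.lTensor A (comul (R := ℂ))) (comul (R := ℂ) x) :=
    Coalgebra.coassoc_apply x
  have h2 : L ((LinearMap.rTensor A (comul (R := ℂ))) (comul (R := ℂ) x))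
      = x ⊗ₜ[ℂ] (1 : A) := by
    rw [hL, LinearMap.comp_apply, LinearEquiv.coe_coe, hco]
    rw [← r.eq, map_sum, map_sum]
    have hterm : ∀ t ∈ r.index,
        (LinearMap.lTensor A (LinearMap.mul' ℂ A ∘ₗ LinearMap.lTensor A (S' (A := A))))
          ((LinearMap.lTensor A (comul (R := ℂ))) (r.left t ⊗ₜ[ℂ] r.right t))
        = (counit (R := ℂ) (r.right t)) • (r.left t ⊗ₜ[ℂ] (1 : A)) := by
      intro t _
      rw [LinearMap.lTensor_tmul, LinearMap.lTensor_tmul, LinearMap.comp_apply]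
      rw [HopfAlgebra.mul_antipode_lTensor_comul_apply (R := ℂ)]
      rw [Algebra.algebraMap_eq_smul_one, TensorProduct.tmul_smul]
    rw [Finset.sum_congr rfl hterm]
    calc ∑ t ∈ r.index, (counit (R := ℂ) (r.right t)) • (r.left t ⊗ₜ[ℂ] (1 : A))
        = (∑ t ∈ r.index, (counit (R := ℂ) (r.right t)) • r.left t) ⊗ₜ[ℂ] (1 : A) := by
          rw [TensorProduct.sum_tmul]
          refine Finset.sum_congr rfl fun t _ => ?_
          rw [TensorProduct.smul_tmul']
      _ = x ⊗ₜ[ℂ] (1 : A) := by rw [repr_sum_counit_smul_left r]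
  rw [← h1, h2]

/-- Applying a bilinear map to a tensor identity. -/
lemma bilin_of_tmul_eq {M : Type*} [AddCommGroup M] [Module ℂ M]
    (B : A →ₗ[ℂ] A →ₗ[ℂ] M) {ι : Type*} {s : Finset ι} {f g : ι → A} {u v : A}
    (h : ∑ i ∈ s, f i ⊗ₜ[ℂ] g i = u ⊗ₜ[ℂ] v) :
    ∑ i ∈ s, B (f i) (g i) = B u v := by
  have h2 := congrArg (TensorProduct.lift B) h
  simpa [map_sum] using h2

lemma bilin_of_tmul_eq₂ {M : Type*} [AddCommGroup M] [Module ℂ M]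
    (B : A →ₗ[ℂ] A →ₗ[ℂ] M) {ι : Type*} {s : Finset ι} {κ : ι → Type*}
    {t : ∀ i, Finset (κ i)} {f g : ∀ i, κ i → A} {u v : A}
    (h : ∑ i ∈ s, ∑ k ∈ t i, f i k ⊗ₜ[ℂ] g i k = u ⊗ₜ[ℂ] v) :
    ∑ i ∈ s, ∑ k ∈ t i, B (f i k) (g i k) = B u v := by
  have h2 := congrArg (TensorProduct.lift B) h
  simpa [map_sum] using h2

lemma smul_eq_mul_smul_one (c : ℂ) (X : A) : c • X = X * (c • (1 : A)) := by
  rw [mul_smul_comm, mul_one]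

/-- The antipode is anti-multiplicative. -/
theorem antipode_mul' (a b : A) : S' (a * b) = S' b * S' a := by
  classical
  set ra := ℛ ℂ a with hra
  set rb := ℛ ℂ b with hrb
  set ra2 : ∀ i : A × A, Repr ℂ (ra.right i) (A × A) := fun i => ℛ ℂ (ra.right i) with hra2
  set rb2 : ∀ j : A × A, Repr ℂ (rb.right j) (A × A) := fun j => ℛ ℂ (rb.right j) with hrb2
  have hSa : S' a = ∑ i ∈ ra.index, counit (R := ℂ) (ra.right i) • S' (ra.left i) := by
    conv_lhs => rw [← repr_sum_counit_smul_left ra]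
    rw [map_sum]
    exact Finset.sum_congr rfl fun i _ => map_smul _ _ _
  have hSb : S' b = ∑ j ∈ rb.index, counit (R := ℂ) (rb.right j) • S' (rb.left j) := by
    conv_lhs => rw [← repr_sum_counit_smul_left rb]
    rw [map_sum]
    exact Finset.sum_congr rfl fun j _ => map_smul _ _ _
  have step1 : S' b * S' a = ∑ j ∈ rb.index, ∑ i ∈ ra.index,
      (counit (R := ℂ) (ra.right i * rb.right j)) • (S' (rb.left j) * S' (ra.left i)) := by
    rw [hSa, hSb, Finset.sum_mul]
    refine Finset.sum_congr rfl fun j _ => ?_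
    rw [Finset.mul_sum]
    refine Finset.sum_congr rfl fun i _ => ?_
    rw [smul_mul_assoc, mul_smul_comm, smul_smul, Bialgebra.counit_mul,
      mul_comm (counit (R := ℂ) (rb.right j))]
  have step2 : S' b * S' a = ∑ j ∈ rb.index, ∑ i ∈ ra.index,
      (S' (rb.left j) * S' (ra.left i)) *
        (∑ p ∈ (ra2 i).index ×ˢ (rb2 j).index,
          ((ra2 i).left p.1 * (rb2 j).left p.2) *
            S' ((ra2 i).right p.1 * (rb2 j).right p.2)) := by
    rw [step1]
    refine Finset.sum_congr rfl fun j _ => Finset.sum_congr rfl fun i _ => ?_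
    rw [smul_eq_mul_smul_one]
    congr 1
    rw [← HopfAlgebra.sum_mul_antipode_eq_smul (R := ℂ) (reprMul (ra2 i) (rb2 j))]
    rfl
  have step3 : S' b * S' a = ∑ j ∈ rb.index, ∑ l ∈ (rb2 j).index, ∑ i ∈ ra.index,
      ∑ k ∈ (ra2 i).index,
        S' (rb.left j) * ((S' (ra.left i) * (ra2 i).left k) *
          ((rb2 j).left l * S' ((ra2 i).right k * (rb2 j).right l))) := by
    rw [step2]
    refine Finset.sum_congr rfl fun j _ => ?_
    have inner : ∀ i ∈ ra.index,
        (S' (rb.left j) * S' (ra.left i)) *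
          (∑ p ∈ (ra2 i).index ×ˢ (rb2 j).index,
            ((ra2 i).left p.1 * (rb2 j).left p.2) *
              S' ((ra2 i).right p.1 * (rb2 j).right p.2))
        = ∑ k ∈ (ra2 i).index, ∑ l ∈ (rb2 j).index,
            S' (rb.left j) * ((S' (ra.left i) * (ra2 i).left k) *
              ((rb2 j).left l * S' ((ra2 i).right k * (rb2 j).right l))) := by
      intro i _
      rw [Finset.sum_product, Finset.mul_sum]
      refine Finset.sum_congr rfl fun k _ => ?_
      rw [Finset.mul_sum]
      refine Finset.sum_congr rfl fun l _ => ?_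
      simp only [mul_assoc]
    rw [Finset.sum_congr rfl inner]
    have swap1 : ∀ i ∈ ra.index,
        (∑ k ∈ (ra2 i).index, ∑ l ∈ (rb2 j).index,
          S' (rb.left j) * ((S' (ra.left i) * (ra2 i).left k) *
            ((rb2 j).left l * S' ((ra2 i).right k * (rb2 j).right l))))
        = ∑ l ∈ (rb2 j).index, ∑ k ∈ (ra2 i).index,
            S' (rb.left j) * ((S' (ra.left i) * (ra2 i).left k) *
              ((rb2 j).left l * S' ((ra2 i).right k * (rb2 j).right l))) := by
      intro i _
      exact Finset.sum_comm
    rw [Finset.sum_congr rfl swap1]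
    exact Finset.sum_comm
  have step4 : S' b * S' a = ∑ j ∈ rb.index, ∑ l ∈ (rb2 j).index,
      S' (rb.left j) * ((1 : A) * ((rb2 j).left l * S' (a * (rb2 j).right l))) := by
    rw [step3]
    refine Finset.sum_congr rfl fun j _ => Finset.sum_congr rfl fun l _ => ?_
    set B2 : A →ₗ[ℂ] A →ₗ[ℂ] A := LinearMap.mk₂ ℂ
      (fun u v => S' (rb.left j) * (u * ((rb2 j).left l * S' (v * (rb2 j).right l))))
      (by intros; simp [add_mul, mul_add])
      (by intros; simp [smul_mul_assoc, mul_smul_comm])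
      (by intros; simp [add_mul, mul_add])
      (by intros; simp [smul_mul_assoc, mul_smul_comm]) with hB2
    have happ := bilin_of_tmul_eq₂ B2 (E1 ra ra2)
    calc ∑ i ∈ ra.index, ∑ k ∈ (ra2 i).index,
          S' (rb.left j) * ((S' (ra.left i) * (ra2 i).left k) *
            ((rb2 j).left l * S' ((ra2 i).right k * (rb2 j).right l)))
        = ∑ i ∈ ra.index, ∑ k ∈ (ra2 i).index,
            B2 (S' (ra.left i) * (ra2 i).left k) ((ra2 i).right k) := by
          refine Finset.sum_congr rfl fun i _ => Finset.sum_congr rfl fun k _ => ?_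
          rw [hB2]
          rfl
      _ = B2 1 a := happ
      _ = S' (rb.left j) * ((1 : A) * ((rb2 j).left l * S' (a * (rb2 j).right l))) := by
          rw [hB2]; rfl
  have step5 : S' b * S' a = S' (a * b) := by
    rw [step4]
    set B3 : A →ₗ[ℂ] A →ₗ[ℂ] A := LinearMap.mk₂ ℂ
      (fun u v => u * S' (a * v))
      (by intros; simp [add_mul, mul_add])
      (by intros; simp [smul_mul_assoc, mul_smul_comm])
      (by intros; simp [add_mul, mul_add])
      (by intros; simp [smul_mul_assoc, mul_smul_comm]) with hB3
    have happ := bilin_of_tmul_eq₂ B3 (E1 rb rb2)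
    calc ∑ j ∈ rb.index, ∑ l ∈ (rb2 j).index,
          S' (rb.left j) * ((1 : A) * ((rb2 j).left l * S' (a * (rb2 j).right l)))
        = ∑ j ∈ rb.index, ∑ l ∈ (rb2 j).index,
            B3 (S' (rb.left j) * (rb2 j).left l) ((rb2 j).right l) := by
          refine Finset.sum_congr rfl fun j _ => Finset.sum_congr rfl fun l _ => ?_
          rw [hB3]
          simp only [LinearMap.mk₂_apply]
          simp only [one_mul, mul_assoc]
      _ = B3 1 b := happ
      _ = S' (a * b) := by rw [hB3]; simp only [LinearMap.mk₂_apply, one_mul]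
  exact step5.symm

section Conv

variable {B : Type*} [Ring B] [Algebra ℂ B]

/-- Convolution product on linear maps from the coalgebra `A` to an algebra `B`. -/
noncomputable def conv (f g : A →ₗ[ℂ] B) : A →ₗ[ℂ] B :=
  LinearMap.mul' ℂ B ∘ₗ TensorProduct.map f g ∘ₗ comul (R := ℂ)

lemma conv_repr (f g : A →ₗ[ℂ] B) {a : A} {ι : Type*} (r : Repr ℂ a ι) :
    conv f g a = ∑ i ∈ r.index, f (r.left i) * g (r.right i) := by
  rw [conv, LinearMap.comp_apply, LinearMap.comp_apply, ← r.eq, map_sum, map_sum]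
  exact Finset.sum_congr rfl fun i _ => by
    rw [TensorProduct.map_tmul, LinearMap.mul'_apply]

/-- The unit of the convolution algebra. -/
noncomputable def convOne : A →ₗ[ℂ] B :=
  (Algebra.linearMap ℂ B) ∘ₗ counit (R := ℂ)

lemma _root_.convOne_apply (a : A) : (_root_.convOne : A →ₗ[ℂ] B) a = (counit (R := ℂ) a) • (1 : B) := by
  rw [_root_.convOne, LinearMap.comp_apply, Algebra.linearMap_apply, Algebra.algebraMap_eq_smul_one]

lemma conv_convOne_left (f : A →ₗ[ℂ] B) : conv _root_.convOne f = f := by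
  ext a
  set r := ℛ ℂ a
  rw [conv_repr _ _ r]
  calc ∑ i ∈ r.index, (_root_.convOne : A →ₗ[ℂ] B) (r.left i) * f (r.right i)
      = ∑ i ∈ r.index, counit (R := ℂ) (r.left i) • f (r.right i) := by
        refine Finset.sum_congr rfl fun i _ => ?_
        rw [_root_.convOne_apply, smul_mul_assoc, one_mul]
    _ = f (∑ i ∈ r.index, counit (R := ℂ) (r.left i) • r.right i) := by
        rw [map_sum]
        exact Finset.sum_congr rfl fun i _ => (map_smul f _ _).symm
    _ = f a := by rw [repr_sum_counit_smul_right r]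

lemma conv_convOne_right (f : A →ₗ[ℂ] B) : conv f _root_.convOne = f := by
  ext a
  set r := ℛ ℂ a
  rw [conv_repr _ _ r]
  calc ∑ i ∈ r.index, f (r.left i) * (_root_.convOne : A →ₗ[ℂ] B) (r.right i)
      = ∑ i ∈ r.index, counit (R := ℂ) (r.right i) • f (r.left i) := by
        refine Finset.sum_congr rfl fun i _ => ?_
        rw [_root_.convOne_apply, mul_smul_comm, mul_one]
    _ = f (∑ i ∈ r.index, counit (R := ℂ) (r.right i) • r.left i) := by
        rw [map_sum]
        exact Finset.sum_congr rfl fun i _ => (map_smul f _ _).symm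
    _ = f a := by rw [repr_sum_counit_smul_left r]

lemma conv_assoc (f g h : A →ₗ[ℂ] B) : conv (conv f g) h = conv f (conv g h) := by
  ext a
  set r := ℛ ℂ a with hr
  set r1 : ∀ i : A × A, Repr ℂ (r.left i) (A × A) := fun i => ℛ ℂ (r.left i) with hr1
  set r2 : ∀ i : A × A, Repr ℂ (r.right i) (A × A) := fun i => ℛ ℂ (r.right i) with hr2
  have key := Coalgebra.sum_tmul_tmul_eq (R := ℂ) r r1 r2
  set μ : A ⊗[ℂ] (A ⊗[ℂ] A) →ₗ[ℂ] B :=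
    LinearMap.mul' ℂ B ∘ₗ TensorProduct.map f (LinearMap.mul' ℂ B ∘ₗ TensorProduct.map g h)
    with hμ
  have key2 := congrArg μ key
  rw [map_sum, map_sum] at key2
  simp only [map_sum] at key2
  have hμt : ∀ x y z : A, μ (x ⊗ₜ[ℂ] (y ⊗ₜ[ℂ] z)) = f x * (g y * h z) := by
    intro x y z
    rw [hμ]
    simp only [LinearMap.comp_apply, TensorProduct.map_tmul, LinearMap.mul'_apply]
  simp only [hμt] at key2
  calc conv (conv f g) h a
      = ∑ i ∈ r.index, conv f g (r.left i) * h (r.right i) := conv_repr _ _ r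
    _ = ∑ i ∈ r.index, ∑ j ∈ (r1 i).index,
          f ((r1 i).left j) * ((g ((r1 i).right j)) * h (r.right i)) := by
        refine Finset.sum_congr rfl fun i _ => ?_
        rw [conv_repr _ _ (r1 i), Finset.sum_mul]
        exact Finset.sum_congr rfl fun j _ => by rw [mul_assoc]
    _ = ∑ i ∈ r.index, ∑ j ∈ (r2 i).index,
          f (r.left i) * (g ((r2 i).left j) * h ((r2 i).right j)) := key2
    _ = ∑ i ∈ r.index, f (r.left i) * conv g h (r.right i) := by
        refine Finset.sum_congr rfl fun i _ => ?_
        rw [conv_repr _ _ (r2 i), Finset.mul_sum]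
    _ = conv f (conv g h) a := (conv_repr _ _ r).symm

end Conv

/-- The antipode is anti-comultiplicative. -/
theorem comul_antipode' (x : A) :
    comul (R := ℂ) (S' x) =
      (TensorProduct.comm ℂ A A) (TensorProduct.map S' S' (comul (R := ℂ) x)) := by
  classical
  set f : A →ₗ[ℂ] A ⊗[ℂ] A := comul (R := ℂ) ∘ₗ S' with hf
  set g : A →ₗ[ℂ] A ⊗[ℂ] A := comul (R := ℂ) with hg
  set h : A →ₗ[ℂ] A ⊗[ℂ] A :=
    (TensorProduct.comm ℂ A A).toLinearMap ∘ₗ TensorProduct.map S' S' ∘ₗ comul (R := ℂ)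
    with hh
  have e1 : conv g f = _root_.convOne := by
    ext a
    set r := ℛ ℂ a
    rw [conv_repr _ _ r, _root_.convOne_apply]
    calc ∑ i ∈ r.index, g (r.left i) * f (r.right i)
        = ∑ i ∈ r.index, comul (R := ℂ) (r.left i * S' (r.right i)) := by
          refine Finset.sum_congr rfl fun i _ => ?_
          rw [hf, hg, LinearMap.comp_apply, Bialgebra.comul_mul]
      _ = comul (R := ℂ) (∑ i ∈ r.index, r.left i * S' (r.right i)) := (map_sum _ _ _).symm
      _ = comul (R := ℂ) ((counit (R := ℂ) a) • (1 : A)) := by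
          rw [HopfAlgebra.sum_mul_antipode_eq_smul (R := ℂ) r]
      _ = (counit (R := ℂ) a) • (1 : A ⊗[ℂ] A) := by
          rw [map_smul, comul_one', Algebra.TensorProduct.one_def]
  have e2 : conv h g = _root_.convOne := by
    ext x0
    set r := ℛ ℂ x0 with hrdef
    set r2 : ∀ i : A × A, Repr ℂ (r.right i) (A × A) := fun i => ℛ ℂ (r.right i) with hr2def
    set rr : ∀ i : A × A, ∀ k : A × A, Repr ℂ ((r2 i).right k) (A × A) :=
      fun i k => ℛ ℂ ((r2 i).right k) with hrrdef
    -- conv h g = Ψ ∘ (rTensor A comul) ∘ comul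
    set Ψ : (A ⊗[ℂ] A) ⊗[ℂ] A →ₗ[ℂ] A ⊗[ℂ] A :=
      LinearMap.mul' ℂ (A ⊗[ℂ] A) ∘ₗ
        TensorProduct.map ((TensorProduct.comm ℂ A A).toLinearMap ∘ₗ TensorProduct.map S' S')
          (comul (R := ℂ)) with hΨ
    set Ψ2 : A ⊗[ℂ] (A ⊗[ℂ] A) →ₗ[ℂ] A ⊗[ℂ] A :=
      Ψ ∘ₗ (TensorProduct.assoc ℂ A A A).symm.toLinearMap with hΨ2
    have hconv : conv h g x0 = Ψ ((LinearMap.rTensor A (comul (R := ℂ))) (comul (R := ℂ) x0)) := by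
      rw [conv, LinearMap.comp_apply, LinearMap.comp_apply, ← r.eq, map_sum, map_sum,
        map_sum, map_sum]
      refine Finset.sum_congr rfl fun i _ => ?_
      rw [TensorProduct.map_tmul, LinearMap.rTensor_tmul, hΨ]
      simp only [LinearMap.comp_apply, TensorProduct.map_tmul]
      rw [hh, hg]
      simp only [LinearMap.comp_apply]
    rw [hconv]
    have hco : Ψ ((LinearMap.rTensor A (comul (R := ℂ))) (comul (R := ℂ) x0))
        = Ψ2 ((LinearMap.lTensor A (comul (R := ℂ))) (comul (R := ℂ) x0)) := by
      rw [hΨ2, LinearMap.comp_apply]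
      refine congrArg Ψ ?_
      exact (Coalgebra.coassoc_symm_apply x0).symm
    rw [hco]
    have hnest : (LinearMap.lTensor A (comul (R := ℂ))) (comul (R := ℂ) x0)
        = ∑ i ∈ r.index, ∑ k ∈ (r2 i).index,
            r.left i ⊗ₜ[ℂ] ((r2 i).left k ⊗ₜ[ℂ] (r2 i).right k) := by
      rw [← r.eq, map_sum]
      refine Finset.sum_congr rfl fun i _ => ?_
      rw [LinearMap.lTensor_tmul, ← (r2 i).eq, TensorProduct.tmul_sum]
    rw [hnest, map_sum]
    simp only [map_sum]
    have hterm : ∀ i ∈ r.index, ∀ k ∈ (r2 i).index,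
        Ψ2 (r.left i ⊗ₜ[ℂ] ((r2 i).left k ⊗ₜ[ℂ] (r2 i).right k))
        = ∑ t ∈ (rr i k).index,
            (S' ((r2 i).left k) * (rr i k).left t) ⊗ₜ[ℂ] (S' (r.left i) * (rr i k).right t) := by
      intro i _ k _
      rw [hΨ2, LinearMap.comp_apply]
      rw [show ((TensorProduct.assoc ℂ A A A).symm.toLinearMap)
            (r.left i ⊗ₜ[ℂ] ((r2 i).left k ⊗ₜ[ℂ] (r2 i).right k))
          = (r.left i ⊗ₜ[ℂ] (r2 i).left k) ⊗ₜ[ℂ] (r2 i).right k from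
        TensorProduct.assoc_symm_tmul ..]
      rw [hΨ]
      simp only [LinearMap.comp_apply, TensorProduct.map_tmul, TensorProduct.comm_tmul,
        LinearMap.mul'_apply, LinearEquiv.coe_coe]
      rw [← (rr i k).eq, Finset.mul_sum]
      refine Finset.sum_congr rfl fun t _ => ?_
      rw [Algebra.TensorProduct.tmul_mul_tmul]
    calc ∑ i ∈ r.index, ∑ k ∈ (r2 i).index,
          Ψ2 (r.left i ⊗ₜ[ℂ] ((r2 i).left k ⊗ₜ[ℂ] (r2 i).right k))
        = ∑ i ∈ r.index, ∑ k ∈ (r2 i).index, ∑ t ∈ (rr i k).index,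
            (S' ((r2 i).left k) * (rr i k).left t) ⊗ₜ[ℂ] (S' (r.left i) * (rr i k).right t) := by
          refine Finset.sum_congr rfl fun i hi => Finset.sum_congr rfl fun k hk => ?_
          exact hterm i hi k hk
      _ = ∑ i ∈ r.index,
            (LinearMap.lTensor A (LinearMap.mulLeft ℂ (S' (r.left i))))
              (∑ k ∈ (r2 i).index, ∑ t ∈ (rr i k).index,
                (S' ((r2 i).left k) * (rr i k).left t) ⊗ₜ[ℂ] (rr i k).right t) := by
          refine Finset.sum_congr rfl fun i _ => ?_
          rw [map_sum]
          refine Finset.sum_congr rfl fun k _ => ?_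
          rw [map_sum]
          refine Finset.sum_congr rfl fun t _ => ?_
          rw [LinearMap.lTensor_tmul, LinearMap.mulLeft_apply]
      _ = ∑ i ∈ r.index,
            (LinearMap.lTensor A (LinearMap.mulLeft ℂ (S' (r.left i)))) ((1 : A) ⊗ₜ[ℂ] r.right i) := by
          refine Finset.sum_congr rfl fun i _ => ?_
          rw [E1 (r2 i) (rr i)]
      _ = (1 : A) ⊗ₜ[ℂ] (∑ i ∈ r.index, S' (r.left i) * r.right i) := by
          rw [TensorProduct.tmul_sum]
          refine Finset.sum_congr rfl fun i _ => ?_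
          rw [LinearMap.lTensor_tmul, LinearMap.mulLeft_apply]
      _ = _root_.convOne x0 := by
          rw [HopfAlgebra.sum_antipode_mul_eq_smul (R := ℂ) r, _root_.convOne_apply]
          rw [TensorProduct.tmul_smul, Algebra.TensorProduct.one_def]
  have huniq : f = h := by
    calc f = conv _root_.convOne f := (conv_convOne_left f).symm
      _ = conv (conv h g) f := by rw [e2]
      _ = conv h (conv g f) := conv_assoc h g f
      _ = conv h _root_.convOne := by rw [e1]
      _ = h := conv_convOne_right h
  have := congrFun (congrArg (fun (F : A →ₗ[ℂ] A ⊗[ℂ] A) => (F : A → A ⊗[ℂ] A)) huniq) x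
  simpa [hf, hh] using this

section Invol

/-- Skew antipode identity for involutory Hopf algebras: `∑ x₂ S(x₁) = ε(x) 1`. -/
lemma skew_antipode (hinv : ∀ a : A, S' (S' a) = a) {v : A} {ι : Type*} (rv : Repr ℂ v ι) :
    ∑ i ∈ rv.index, rv.right i * S' (rv.left i) = (counit (R := ℂ) v) • (1 : A) := by
  have h0 := HopfAlgebra.sum_mul_antipode_eq_smul (R := ℂ) rv
  have h1 := congrArg (S' (A := A)) h0
  rw [map_sum, map_smul, antipode_one'] at h1
  calc ∑ i ∈ rv.index, rv.right i * S' (rv.left i)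
      = ∑ i ∈ rv.index, S' (rv.left i * S' (rv.right i)) := by
        refine Finset.sum_congr rfl fun i _ => ?_
        rw [antipode_mul', hinv]
    _ = (counit (R := ℂ) v) • (1 : A) := h1

/-- Sweedler: `∑ x₁ ⊗ x₃ S(x₂) = x ⊗ 1` (involutory case). -/
lemma E3 (hinv : ∀ a : A, S' (S' a) = a) {x : A} {ι κ : Type*} (r : Repr ℂ x ι)
    (r1 : ∀ t : ι, Repr ℂ (r.left t) κ) :
    ∑ t ∈ r.index, ∑ s ∈ (r1 t).index,
      (r1 t).left s ⊗ₜ[ℂ] (r.right t * S' ((r1 t).right s)) = x ⊗ₜ[ℂ] (1 : A) := by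
  classical
  -- q₃ : A ⊗ A → A, q ⊗ r ↦ r * S q
  set q₃ : A ⊗[ℂ] A →ₗ[ℂ] A :=
    LinearMap.mul' ℂ A ∘ₗ (TensorProduct.comm ℂ A A).toLinearMap ∘ₗ
      LinearMap.rTensor A (S' (A := A)) with hq₃
  have hq₃t : ∀ u v : A, q₃ (u ⊗ₜ[ℂ] v) = v * S' u := by
    intro u v
    rw [hq₃]
    simp only [LinearMap.comp_apply, LinearMap.rTensor_tmul, LinearEquiv.coe_coe,
      TensorProduct.comm_tmul, LinearMap.mul'_apply]
  have hq₃comul : ∀ v : A, q₃ (comul (R := ℂ) v) = (counit (R := ℂ) v) • (1 : A) := by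
    intro v
    set rv := ℛ ℂ v
    rw [← rv.eq, map_sum]
    calc ∑ i ∈ rv.index, q₃ (rv.left i ⊗ₜ[ℂ] rv.right i)
        = ∑ i ∈ rv.index, rv.right i * S' (rv.left i) :=
          Finset.sum_congr rfl fun i _ => hq₃t _ _
      _ = (counit (R := ℂ) v) • (1 : A) := skew_antipode hinv rv
  set L : (A ⊗[ℂ] A) ⊗[ℂ] A →ₗ[ℂ] A ⊗[ℂ] A :=
    (LinearMap.lTensor A q₃) ∘ₗ (TensorProduct.assoc ℂ A A A).toLinearMap with hL
  have hnest : (LinearMap.rTensor A (comul (R := ℂ))) (comul (R := ℂ) x)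
      = ∑ t ∈ r.index, ∑ s ∈ (r1 t).index,
          ((r1 t).left s ⊗ₜ[ℂ] (r1 t).right s) ⊗ₜ[ℂ] r.right t := by
    rw [← r.eq, map_sum]
    refine Finset.sum_congr rfl fun t _ => ?_
    rw [LinearMap.rTensor_tmul, ← (r1 t).eq, TensorProduct.sum_tmul]
  have h1 : L ((LinearMap.rTensor A (comul (R := ℂ))) (comul (R := ℂ) x))
      = ∑ t ∈ r.index, ∑ s ∈ (r1 t).index,
        (r1 t).left s ⊗ₜ[ℂ] (r.right t * S' ((r1 t).right s)) := by
    rw [hnest, map_sum]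
    refine Finset.sum_congr rfl fun t _ => ?_
    rw [map_sum]
    refine Finset.sum_congr rfl fun s _ => ?_
    rw [hL, LinearMap.comp_apply]
    rw [show ((TensorProduct.assoc ℂ A A A).toLinearMap)
          (((r1 t).left s ⊗ₜ[ℂ] (r1 t).right s) ⊗ₜ[ℂ] r.right t)
        = (r1 t).left s ⊗ₜ[ℂ] ((r1 t).right s ⊗ₜ[ℂ] r.right t) from
      TensorProduct.assoc_tmul ..]
    rw [LinearMap.lTensor_tmul, hq₃t]
  have h2 : L ((LinearMap.rTensor A (comul (R := ℂ))) (comul (R := ℂ) x))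
      = x ⊗ₜ[ℂ] (1 : A) := by
    rw [hL, LinearMap.comp_apply]
    have e : ((TensorProduct.assoc ℂ A A A).toLinearMap)
        ((LinearMap.rTensor A (comul (R := ℂ))) (comul (R := ℂ) x))
        = (LinearMap.lTensor A (comul (R := ℂ))) (comul (R := ℂ) x) := by
      simpa using Coalgebra.coassoc_apply (R := ℂ) x
    rw [e, ← r.eq, map_sum, map_sum]
    calc ∑ t ∈ r.index,
          (LinearMap.lTensor A q₃) ((LinearMap.lTensor A (comul (R := ℂ)))
            (r.left t ⊗ₜ[ℂ] r.right t))
        = ∑ t ∈ r.index, (counit (R := ℂ) (r.right t)) • (r.left t ⊗ₜ[ℂ] (1 : A)) := by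
          refine Finset.sum_congr rfl fun t _ => ?_
          rw [LinearMap.lTensor_tmul, LinearMap.lTensor_tmul, hq₃comul,
            TensorProduct.tmul_smul]
      _ = (∑ t ∈ r.index, (counit (R := ℂ) (r.right t)) • r.left t) ⊗ₜ[ℂ] (1 : A) := by
          rw [TensorProduct.sum_tmul]
          exact Finset.sum_congr rfl fun t _ => (TensorProduct.smul_tmul' _ _ _).symm
      _ = x ⊗ₜ[ℂ] (1 : A) := by rw [repr_sum_counit_smul_left r]
  rw [← h1, h2]

end Invol

section FinDim

/-- Contraction of the first tensor factor against a functional, as a linear map in the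
functional. -/
noncomputable def contrL : (A →ₗ[ℂ] ℂ) →ₗ[ℂ] (A ⊗[ℂ] A →ₗ[ℂ] A) where
  toFun φ := (TensorProduct.lid ℂ A).toLinearMap ∘ₗ (LinearMap.rTensor A φ)
  map_add' φ ψ := by
    refine TensorProduct.ext' fun p q => ?_
    simp [add_smul]
  map_smul' c φ := by
    refine TensorProduct.ext' fun p q => ?_
    simp [smul_smul]

lemma contrL_tmul (φ : A →ₗ[ℂ] ℂ) (p q : A) : contrL φ (p ⊗ₜ[ℂ] q) = φ p • q := by
  simp [contrL]

variable [Module.Finite ℂ A]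

/-- The character of the left regular representation. -/
noncomputable def chi : A →ₗ[ℂ] ℂ := (LinearMap.trace ℂ A) ∘ₗ (LinearMap.mul ℂ A)

lemma chi_apply {ι : Type*} [Fintype ι] [DecidableEq ι] (e : Module.Basis ι ℂ A) (c : A) :
    chi c = ∑ i, e.repr (c * e i) i := by
  rw [chi, LinearMap.comp_apply, LinearMap.trace_eq_matrix_trace ℂ e, Matrix.trace]
  simp [Matrix.diag, LinearMap.toMatrix_apply, LinearMap.mul_apply']

lemma trace_mulLeft_eq_chi (c : A) :
    LinearMap.trace ℂ A (LinearMap.mulLeft ℂ c) = chi c := by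
  rw [chi, LinearMap.comp_apply]
  congr 1

lemma tensor_repr_eq {ι : Type*} [Fintype ι] [DecidableEq ι] (e : Module.Basis ι ℂ A)
    (j k : ι) (t : A ⊗[ℂ] A) :
    (e.tensorProduct e).repr t (j, k)
      = LinearMap.mul' ℂ ℂ ((TensorProduct.map (e.coord j) (e.coord k)) t) := by
  induction t with
  | zero => simp
  | tmul p q =>
      simp only [Module.Basis.tensorProduct_repr_tmul_apply, TensorProduct.map_tmul,
        LinearMap.mul'_apply, Module.Basis.coord_apply, smul_eq_mul]
      ring
  | add x y hx hy => simp [map_add, hx, hy]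

lemma functional_eq_sum {ι : Type*} [Fintype ι] (e : Module.Basis ι ℂ A) (φ : A →ₗ[ℂ] ℂ) :
    φ = ∑ i, φ (e i) • e.coord i := by
  refine e.ext fun l => ?_
  simp [Module.Basis.coord_apply, Module.Basis.repr_self, Finsupp.single_apply, eq_comm]

lemma CE {ι : Type*} [Fintype ι] [DecidableEq ι] (e : Module.Basis ι ℂ A)
    (Z : A ⊗[ℂ] A →ₗ[ℂ] A ⊗[ℂ] A) :
    ∑ i, contrL (e.coord i) (Z (comul (R := ℂ) (e i)))
      = ∑ j, ∑ k, contrL (conv (e.coord j) (e.coord k)) (Z (e j ⊗ₜ[ℂ] e k)) := by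
  classical
  set c : ι → ι → ι → ℂ := fun i j k => (e.tensorProduct e).repr (comul (R := ℂ) (e i)) (j, k)
    with hc
  have hexp : ∀ i, comul (R := ℂ) (e i) = ∑ p : ι × ι, c i p.1 p.2 • (e p.1 ⊗ₜ[ℂ] e p.2) := by
    intro i
    have h := ((e.tensorProduct e).sum_repr (comul (R := ℂ) (e i))).symm
    calc comul (R := ℂ) (e i)
        = ∑ p : ι × ι, (e.tensorProduct e).repr (comul (R := ℂ) (e i)) p •
            (e.tensorProduct e) p := h
      _ = ∑ p : ι × ι, c i p.1 p.2 • (e p.1 ⊗ₜ[ℂ] e p.2) := by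
          refine Finset.sum_congr rfl fun p _ => ?_
          rw [Module.Basis.tensorProduct_apply, hc]
  have hdual : ∀ j k, conv (e.coord j) (e.coord k) = ∑ i, c i j k • e.coord i := by
    intro j k
    refine e.ext fun l => ?_
    have hl : conv (e.coord j) (e.coord k) (e l)
        = LinearMap.mul' ℂ ℂ ((TensorProduct.map (e.coord j) (e.coord k))
            (comul (R := ℂ) (e l))) := rfl
    rw [hl, ← tensor_repr_eq e j k]
    simp [hc, Module.Basis.coord_apply, Module.Basis.repr_self, Finsupp.single_apply, eq_comm]
  calc ∑ i, contrL (e.coord i) (Z (comul (R := ℂ) (e i)))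
      = ∑ i, ∑ p : ι × ι, c i p.1 p.2 • contrL (e.coord i) (Z (e p.1 ⊗ₜ[ℂ] e p.2)) := by
        refine Finset.sum_congr rfl fun i _ => ?_
        rw [hexp i, map_sum, map_sum]
        exact Finset.sum_congr rfl fun p _ => by rw [map_smul, map_smul]
    _ = ∑ p : ι × ι, ∑ i, c i p.1 p.2 • contrL (e.coord i) (Z (e p.1 ⊗ₜ[ℂ] e p.2)) :=
        Finset.sum_comm
    _ = ∑ j, ∑ k, ∑ i, c i j k • contrL (e.coord i) (Z (e j ⊗ₜ[ℂ] e k)) := by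
        rw [Fintype.sum_prod_type]
    _ = ∑ j, ∑ k, contrL (conv (e.coord j) (e.coord k)) (Z (e j ⊗ₜ[ℂ] e k)) := by
        refine Finset.sum_congr rfl fun j _ => Finset.sum_congr rfl fun k _ => ?_
        rw [hdual j k, map_sum]
        simp only [LinearMap.sum_apply, LinearMap.smul_apply, map_smul]
    
end FinDim

section Main

variable [Module.Finite ℂ A]

/-- The regular character is a right integral in the dual: `∑ χ(b₁) b₂ = χ(b) 1`. -/
theorem chi_integral (hinv : ∀ a : A, S' (S' a) = a) (b : A) :
    contrL (chi (A := A)) (comul (R := ℂ) b) = chi b • (1 : A) := by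
  classical
  set e := Module.finBasis ℂ A with he
  set rb := ℛ ℂ b with hrb
  -- The map `p ⊗ q ↦ Δ(p) (1 ⊗ S q)`.
  set V : A ⊗[ℂ] A →ₗ[ℂ] A ⊗[ℂ] A :=
    LinearMap.mul' ℂ (A ⊗[ℂ] A) ∘ₗ TensorProduct.map (comul (R := ℂ))
      ((TensorProduct.mk ℂ A A 1) ∘ₗ (S' (A := A))) with hV
  have hVt : ∀ p q : A, V (p ⊗ₜ[ℂ] q) = comul (R := ℂ) p * ((1 : A) ⊗ₜ[ℂ] S' q) := by
    intro p q
    rw [hV]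
    simp only [LinearMap.comp_apply, TensorProduct.map_tmul, TensorProduct.mk_apply,
      LinearMap.mul'_apply]
  have hVcomul : ∀ x : A, V (comul (R := ℂ) x) = x ⊗ₜ[ℂ] (1 : A) := by
    intro x
    set rx := ℛ ℂ x with hrx
    set rx1 : ∀ t : A × A, Repr ℂ (rx.left t) (A × A) := fun t => ℛ ℂ (rx.left t) with hrx1
    rw [← rx.eq, map_sum]
    calc ∑ t ∈ rx.index, V (rx.left t ⊗ₜ[ℂ] rx.right t)
        = ∑ t ∈ rx.index, ∑ s ∈ (rx1 t).index,
            (rx1 t).left s ⊗ₜ[ℂ] ((rx1 t).right s * S' (rx.right t)) := by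
          refine Finset.sum_congr rfl fun t _ => ?_
          rw [hVt, ← (rx1 t).eq, Finset.sum_mul]
          refine Finset.sum_congr rfl fun s _ => ?_
          rw [Algebra.TensorProduct.tmul_mul_tmul, mul_one]
      _ = x ⊗ₜ[ℂ] (1 : A) := E2 rx rx1
  set Wb : A ⊗[ℂ] A →ₗ[ℂ] A ⊗[ℂ] A :=
    (LinearMap.mulLeft ℂ (comul (R := ℂ) b)) ∘ₗ V with hWb
  have step12 : contrL (chi (A := A)) (comul (R := ℂ) b)
      = ∑ i, ∑ t ∈ rb.index, (e.repr (rb.left t * e i) i) • rb.right t := by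
    rw [← rb.eq, map_sum]
    calc ∑ t ∈ rb.index, contrL (chi (A := A)) (rb.left t ⊗ₜ[ℂ] rb.right t)
        = ∑ t ∈ rb.index, ∑ i, (e.repr (rb.left t * e i) i) • rb.right t := by
          refine Finset.sum_congr rfl fun t _ => ?_
          rw [contrL_tmul, chi_apply e, Finset.sum_smul]
      _ = ∑ i, ∑ t ∈ rb.index, (e.repr (rb.left t * e i) i) • rb.right t :=
          Finset.sum_comm
  have step3 : ∀ i, (∑ t ∈ rb.index, (e.repr (rb.left t * e i) i) • rb.right t)
      = contrL (e.coord i) (Wb (comul (R := ℂ) (e i))) := by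
    intro i
    have h1 : Wb (comul (R := ℂ) (e i)) = comul (R := ℂ) b * (e i ⊗ₜ[ℂ] (1 : A)) := by
      rw [hWb, LinearMap.comp_apply, hVcomul, LinearMap.mulLeft_apply]
    have h2 : comul (R := ℂ) b * (e i ⊗ₜ[ℂ] (1 : A))
        = ∑ t ∈ rb.index, (rb.left t * e i) ⊗ₜ[ℂ] rb.right t := by
      rw [← rb.eq, Finset.sum_mul]
      refine Finset.sum_congr rfl fun t _ => ?_
      rw [Algebra.TensorProduct.tmul_mul_tmul, mul_one]
    rw [h1, h2, map_sum]
    refine Finset.sum_congr rfl fun t _ => ?_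
    rw [contrL_tmul, Module.Basis.coord_apply]
  have step4 := CE e Wb
  have step5 : ∀ j, (∑ k, contrL (conv (e.coord j) (e.coord k)) (Wb (e j ⊗ₜ[ℂ] e k)))
      = (e.repr (b * e j) j) • (1 : A) := by
    intro j
    set u := b * e j with hu
    set ru := ℛ ℂ u with hru
    set ru1 : ∀ t : A × A, Repr ℂ (ru.left t) (A × A) := fun t => ℛ ℂ (ru.left t) with hru1
    have hWjk : ∀ k, Wb (e j ⊗ₜ[ℂ] e k)
        = ∑ t ∈ ru.index, ru.left t ⊗ₜ[ℂ] (ru.right t * S' (e k)) := by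
      intro k
      rw [hWb, LinearMap.comp_apply, hVt, LinearMap.mulLeft_apply, ← mul_assoc,
        ← Bialgebra.comul_mul, ← hu, ← ru.eq, Finset.sum_mul]
      refine Finset.sum_congr rfl fun t _ => ?_
      rw [Algebra.TensorProduct.tmul_mul_tmul, mul_one]
    calc ∑ k, contrL (conv (e.coord j) (e.coord k)) (Wb (e j ⊗ₜ[ℂ] e k))
        = ∑ k, ∑ t ∈ ru.index, ∑ s ∈ (ru1 t).index,
            ((e.coord j ((ru1 t).left s)) * (e.coord k ((ru1 t).right s))) •
              (ru.right t * S' (e k)) := by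
          refine Finset.sum_congr rfl fun k _ => ?_
          rw [hWjk k, map_sum]
          refine Finset.sum_congr rfl fun t _ => ?_
          rw [contrL_tmul, conv_repr _ _ (ru1 t), Finset.sum_smul]
      _ = ∑ t ∈ ru.index, ∑ s ∈ (ru1 t).index,
            (e.coord j ((ru1 t).left s)) • (ru.right t * S' ((ru1 t).right s)) := by
          rw [Finset.sum_comm]
          refine Finset.sum_congr rfl fun t _ => ?_
          rw [Finset.sum_comm]
          refine Finset.sum_congr rfl fun s _ => ?_
          have hstep : ∀ k : Fin (Module.finrank ℂ A),
              ((e.coord j ((ru1 t).left s)) * (e.coord k ((ru1 t).right s))) •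
                  (ru.right t * S' (e k))
              = (e.coord j ((ru1 t).left s)) •
                  (ru.right t * ((e.repr ((ru1 t).right s) k) • S' (e k))) := by
            intro k
            rw [mul_smul, mul_smul_comm]
            simp only [Module.Basis.coord_apply]
          rw [Finset.sum_congr rfl fun k _ => hstep k, ← Finset.smul_sum, ← Finset.mul_sum]
          have h3 : ∑ k, (e.repr ((ru1 t).right s) k) • S' (e k) = S' ((ru1 t).right s) := by
            have h4 : ∑ k, (e.repr ((ru1 t).right s) k) • S' (e k)
                = S' (∑ k, (e.repr ((ru1 t).right s) k) • e k) := by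
              rw [map_sum]
              exact Finset.sum_congr rfl fun k _ => (map_smul _ _ _).symm
            rw [h4, e.sum_repr]
          rw [h3]
      _ = (e.repr (b * e j) j) • (1 : A) := by
          have hE3 := E3 hinv ru ru1
          have happ := congrArg (contrL (e.coord j)) hE3
          rw [map_sum] at happ
          simp only [map_sum] at happ
          simp only [contrL_tmul] at happ
          rw [happ, Module.Basis.coord_apply]
  calc contrL (chi (A := A)) (comul (R := ℂ) b)
      = ∑ i, ∑ t ∈ rb.index, (e.repr (rb.left t * e i) i) • rb.right t := step12
    _ = ∑ i, contrL (e.coord i) (Wb (comul (R := ℂ) (e i))) :=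
        Finset.sum_congr rfl fun i _ => step3 i
    _ = ∑ j, ∑ k, contrL (conv (e.coord j) (e.coord k)) (Wb (e j ⊗ₜ[ℂ] e k)) := step4
    _ = ∑ j, (e.repr (b * e j) j) • (1 : A) := Finset.sum_congr rfl fun j _ => step5 j
    _ = chi b • (1 : A) := by rw [← Finset.sum_smul, ← chi_apply e]

end Main

section Main2

variable [Module.Finite ℂ A]

theorem chi_antipode_eq (hinv : ∀ a : A, S' (S' a) = a) (c : A) : chi (S' c) = chi c := by
  classical
  set ψ : A →ₗ[ℂ] ℂ := chi (A := A) ∘ₗ (S' (A := A)) with hψ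
  have hψa : ∀ x : A, ψ x = chi (S' x) := fun x => rfl
  set rc := ℛ ℂ c with hrc
  -- the right-integral identity for χ
  have hint : ∑ t ∈ rc.index, chi (rc.left t) • rc.right t = chi c • (1 : A) := by
    have h := chi_integral hinv c
    rw [← rc.eq, map_sum] at h
    calc ∑ t ∈ rc.index, chi (rc.left t) • rc.right t
        = ∑ t ∈ rc.index, contrL (chi (A := A)) (rc.left t ⊗ₜ[ℂ] rc.right t) :=
          Finset.sum_congr rfl fun t _ => (contrL_tmul _ _ _).symm
      _ = chi c • (1 : A) := h
  -- the analogous left-integral identity for ψ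
  have hint2 : ∑ t ∈ rc.index, ψ (rc.right t) • rc.left t = ψ c • (1 : A) := by
    have h := chi_integral hinv (S' c)
    have hcs : comul (R := ℂ) (S' c)
        = ∑ t ∈ rc.index, S' (rc.right t) ⊗ₜ[ℂ] S' (rc.left t) := by
      rw [comul_antipode', ← rc.eq, map_sum, map_sum]
      refine Finset.sum_congr rfl fun t _ => ?_
      rw [TensorProduct.map_tmul, TensorProduct.comm_tmul]
    rw [hcs, map_sum] at h
    have h2 : S' (∑ t ∈ rc.index, ψ (rc.right t) • rc.left t) = ψ c • (1 : A) := by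
      rw [map_sum]
      calc ∑ t ∈ rc.index, S' (ψ (rc.right t) • rc.left t)
          = ∑ t ∈ rc.index, contrL (chi (A := A)) (S' (rc.right t) ⊗ₜ[ℂ] S' (rc.left t)) := by
            refine Finset.sum_congr rfl fun t _ => ?_
            rw [contrL_tmul, map_smul, hψa]
        _ = chi (S' c) • (1 : A) := h
        _ = ψ c • (1 : A) := by rw [hψa]
    calc ∑ t ∈ rc.index, ψ (rc.right t) • rc.left t
        = S' (S' (∑ t ∈ rc.index, ψ (rc.right t) • rc.left t)) := (hinv _).symm
      _ = S' (ψ c • (1 : A)) := by rw [h2]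
      _ = ψ c • (1 : A) := by rw [map_smul, antipode_one']
  -- pair the two identities
  have hA : ∑ t ∈ rc.index, chi (rc.left t) * ψ (rc.right t) = chi c * ψ 1 := by
    calc ∑ t ∈ rc.index, chi (rc.left t) * ψ (rc.right t)
        = ∑ t ∈ rc.index, ψ (chi (rc.left t) • rc.right t) := by
          refine Finset.sum_congr rfl fun t _ => ?_
          rw [map_smul, smul_eq_mul]
      _ = ψ (∑ t ∈ rc.index, chi (rc.left t) • rc.right t) := (map_sum _ _ _).symm
      _ = ψ (chi c • (1 : A)) := by rw [hint]
      _ = chi c * ψ 1 := by rw [map_smul, smul_eq_mul]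
  have hB : ∑ t ∈ rc.index, chi (rc.left t) * ψ (rc.right t) = ψ c * chi (1 : A) := by
    calc ∑ t ∈ rc.index, chi (rc.left t) * ψ (rc.right t)
        = ∑ t ∈ rc.index, chi (ψ (rc.right t) • rc.left t) := by
          refine Finset.sum_congr rfl fun t _ => ?_
          rw [map_smul, smul_eq_mul, mul_comm]
      _ = chi (∑ t ∈ rc.index, ψ (rc.right t) • rc.left t) := (map_sum _ _ _).symm
      _ = chi (ψ c • (1 : A)) := by rw [hint2]
      _ = ψ c * chi (1 : A) := by rw [map_smul, smul_eq_mul]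
  have hψ1 : ψ (1 : A) = chi (1 : A) := by rw [hψa, antipode_one']
  have hchi1 : chi (1 : A) = (Module.finrank ℂ A : ℂ) := by
    have hm : (LinearMap.mul ℂ A) (1 : A) = LinearMap.id := by
      ext x
      simp [LinearMap.mul_apply']
    rw [chi, LinearMap.comp_apply, hm, LinearMap.trace_id]
  have hn0 : chi (1 : A) ≠ 0 := by
    rw [hchi1]
    haveI : Nontrivial A := ⟨⟨1, 0, fun h => by
      have h1 := counit_one' (A := A)
      rw [h, map_zero] at h1
      exact one_ne_zero h1.symm⟩⟩
    have hpos : 0 < Module.finrank ℂ A := Module.finrank_pos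
    exact Nat.cast_ne_zero.mpr hpos.ne'
  have hmain : chi c * chi (1 : A) = chi (S' c) * chi (1 : A) := by
    rw [← hψa]
    calc chi c * chi (1 : A) = chi c * ψ 1 := by rw [hψ1]
      _ = ψ c * chi (1 : A) := hA.symm.trans hB
  exact (mul_right_cancel₀ hn0 hmain).symm

end Main2

section Lists

variable {A : Type*} [Ring A] [HopfAlgebra ℂ A]

lemma mulLeft_list_prod (l : List A) :
    (l.map (fun x => (LinearMap.mulLeft ℂ x : Module.End ℂ A))).prod
      = LinearMap.mulLeft ℂ l.prod := by
  induction l with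
  | nil =>
      rw [List.map_nil, List.prod_nil, List.prod_nil, LinearMap.mulLeft_one]
      rfl
  | cons x t ih =>
      rw [List.map_cons, List.prod_cons, List.prod_cons, ih, LinearMap.mulLeft_mul]
      rfl

lemma antipode_list_prod (l : List A) :
    (l.map (fun x => S' x)).prod = S' l.reverse.prod := by
  induction l with
  | nil => simpa using antipode_one'.symm
  | cons x t ih =>
      rw [List.map_cons, List.prod_cons, ih, List.reverse_cons, List.prod_append,
        List.prod_cons, List.prod_nil, mul_one, antipode_mul']

end Lists

end AuxHopf

/-- For every `n ≥ 1` and all `a₁, …, aₙ ∈ A`: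
`tr(L_{S(a₁)} ∘ L_{S(a₂)} ∘ ⋯ ∘ L_{S(aₙ)}) = tr(L_{aₙ} ∘ ⋯ ∘ L_{a₂} ∘ L_{a₁})`.
(In components: `C_{x₁⋯xₙ} S^{x₁}{}_{y₁} ⋯ S^{xₙ}{}_{yₙ} = C_{yₙ⋯y₂y₁}`.)
Here products of endomorphisms are compositions, in the written order. -/
theorem trace_mulLeft_antipode
    (A : Type*) [Ring A] [HopfAlgebra ℂ A] [Module.Finite ℂ A]
    (hinv : ∀ a : A, HopfAlgebra.antipode (R := ℂ) (HopfAlgebra.antipode (R := ℂ) a) = a) :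
    ∀ (n : ℕ), 1 ≤ n → ∀ (a : Fin n → A),
      LinearMap.trace ℂ A
          ((List.ofFn (fun i =>
            (LinearMap.mulLeft ℂ (HopfAlgebra.antipode (R := ℂ) (a i)) :
              Module.End ℂ A))).prod)
        = LinearMap.trace ℂ A
            ((List.ofFn (fun i =>
              (LinearMap.mulLeft ℂ (a i) : Module.End ℂ A))).reverse.prod) := by
  intro n _ a
  have hinv' : ∀ x : A, S' (S' x) = x := hinv
  set l : List A := List.ofFn a with hl
  have hLHS : (List.ofFn (fun i =>
      (LinearMap.mulLeft ℂ (HopfAlgebra.antipode (R := ℂ) (a i)) : Module.End ℂ A))).prod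
      = LinearMap.mulLeft ℂ (S' l.reverse.prod) := by
    have h1 : List.ofFn (fun i =>
        (LinearMap.mulLeft ℂ (HopfAlgebra.antipode (R := ℂ) (a i)) : Module.End ℂ A))
        = (l.map (fun x => S' x)).map (fun x => (LinearMap.mulLeft ℂ x : Module.End ℂ A)) := by
      rw [hl, List.map_ofFn, List.map_ofFn]
      rfl
    rw [h1, mulLeft_list_prod, antipode_list_prod]
  have hRHS : (List.ofFn (fun i =>
      (LinearMap.mulLeft ℂ (a i) : Module.End ℂ A))).reverse.prod
      = LinearMap.mulLeft ℂ l.reverse.prod := by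
    have h1 : List.ofFn (fun i => (LinearMap.mulLeft ℂ (a i) : Module.End ℂ A))
        = l.map (fun x => (LinearMap.mulLeft ℂ x : Module.End ℂ A)) := by
      rw [hl, List.map_ofFn]
      rfl
    rw [h1, ← List.map_reverse, mulLeft_list_prod]
  rw [hLHS, hRHS, trace_mulLeft_eq_chi, trace_mulLeft_eq_chi]
  exact chi_antipode_eq hinv' l.reverse.prod
end
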